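/- arXiv:2008.10315 — 3 statements merged into one kernel-verified Lean document; each statement's English description precedes it below -/
import Mathlib

section
/- Let d ≥ 2 and let U ⊆ A_d be a base-point-free monomial subspace of codimension 1. Then: (i) if d = 2, codim U² ∈ {0, 2}; (ii) if d ≥ 3, codim U² ∈ {0, 1}. -/
open MvPolynomial Module

noncomputable section

abbrev PolyR (n : ℕ) := MvPolynomial (Fin n) ℂ

def formSpace (n d : ℕ) : Submodule ℂ (PolyR n) :=
  homogeneousSubmodule (Fin n) ℂ d

/-- Codimension of a subspace `U` inside the space of degree-`d` forms. -/
def vcodim (n d : ℕ) (U : Submodule ℂ (PolyR n)) : ℕ :=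
  finrank ℂ (formSpace n d) - finrank ℂ U

/-- `U` is base-point-free: the only common zero of its members in `ℂⁿ` is `0`. -/
def IsBPF (n : ℕ) (U : Submodule ℂ (PolyR n)) : Prop :=
  ∀ x : Fin n → ℂ, (∀ p ∈ U, eval x p = 0) → x = 0

/-- `m(n,d,k)`: maximum of `codim U²` over codimension-`k` subspaces `U ⊆ A(n)_d`. -/
def mMax (n d k : ℕ) : ℕ :=
  sSup { s | ∃ U : Submodule ℂ (PolyR n),
    U ≤ formSpace n d ∧ vcodim n d U = k ∧ vcodim n (2 * d) (U * U) = s }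

def linForm (n : ℕ) (c : Fin n → ℂ) : PolyR n := ∑ i, c i • X i

def colon (n d : ℕ) (U : Submodule ℂ (PolyR n)) (l : PolyR n) : Submodule ℂ (PolyR n) :=
  Submodule.comap (LinearMap.mulLeft ℂ l) U ⊓ formSpace n (d - 1)

end

/-- `U` is spanned by monomials. -/
def IsMonomialSubspace (n : ℕ) (U : Submodule ℂ (PolyR n)) : Prop :=
  ∃ S : Set (Fin n →₀ ℕ),
    U = Submodule.span ℂ ((fun α => (monomial α (1 : ℂ) : PolyR n)) '' S)


section Aux
open MvPolynomial Module Finsupp Pointwise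
noncomputable section
variable {n : ℕ}

lemma deg_two {β : Fin n →₀ ℕ} {k l : Fin n} (hkl : k ≠ l)
    (h : ∀ m, m ≠ k → m ≠ l → β m = 0) : β.degree = β k + β l := by
  have hsub : β.support ⊆ {k, l} := by
    intro m hm
    rcases eq_or_ne m k with rfl|h1; · simp
    rcases eq_or_ne m l with rfl|h2; · simp
    exact absurd (h m h1 h2) (Finsupp.mem_support_iff.mp hm)
  rw [Finsupp.degree_apply]
  rw [Finset.sum_subset hsub (by intro x _ hx; simpa using Finsupp.notMem_support_iff.mp hx)]
  rw [Finset.sum_pair hkl]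

lemma eq_two {β : Fin n →₀ ℕ} {k l : Fin n} (hkl : k ≠ l)
    (h : ∀ m, m ≠ k → m ≠ l → β m = 0) :
    β = Finsupp.single k (β k) + Finsupp.single l (β l) := by
  ext m
  rcases eq_or_ne m k with rfl|h1
  · simp [Finsupp.single_apply, hkl.symm ]
  rcases eq_or_ne m l with rfl|h2
  · simp [Finsupp.single_apply, hkl]
  · simp [Finsupp.single_apply, h m h1 h2, Ne.symm h1, Ne.symm h2]

lemma deg_add (a b : Fin n →₀ ℕ) : (a + b).degree = a.degree + b.degree := by
  classical
  simp only [degree_eq_weight_one, map_add]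

lemma deg_single (k : Fin n) (c : ℕ) : (Finsupp.single k c).degree = c := by
  classical
  simp [degree_eq_weight_one, Finsupp.weight_apply, Finsupp.sum_single_index]


lemma exists_le_deg (μ : Fin n →₀ ℕ) : ∀ k, k ≤ μ.degree → ∃ β, β ≤ μ ∧ β.degree = k := by
  intro k
  induction k with
  | zero => intro _; exact ⟨0, zero_le, by simp [Finsupp.degree]⟩
  | succ k ih =>
    intro hk
    obtain ⟨β, hle, hdeg⟩ := ih (Nat.le_of_succ_le hk)
    have hne : β ≠ μ := by rintro rfl; omega
    have : ∃ i, β i < μ i := by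
      by_contra hcon
      push_neg at hcon
      exact hne (le_antisymm hle (Finsupp.le_def.mpr hcon))
    obtain ⟨i, hi⟩ := this
    refine ⟨β + Finsupp.single i 1, ?_, by rw [deg_add, hdeg, deg_single]⟩
    rw [Finsupp.le_def]
    intro m
    rcases eq_or_ne m i with rfl|hmi
    · simpa [Finsupp.single_apply] using hi
    · simpa [Finsupp.single_apply, Ne.symm hmi] using Finsupp.le_def.mp hle m
lemma single_le {l : Fin n} {α : Fin n →₀ ℕ} (h : α l ≠ 0) : Finsupp.single l 1 ≤ α := by
  rw [Finsupp.le_def]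
  intro m
  rcases eq_or_ne l m with rfl|hm
  · simp; omega
  · simp [Finsupp.single_eq_of_ne' hm]

lemma core {d : ℕ} (hd : 2 ≤ d) (α μ : Fin n →₀ ℕ)
    (hαd : α.degree = d) (i j : Fin n) (hij : i ≠ j) (hi : α i ≠ 0) (hj : α j ≠ 0)
    (hμ : μ.degree = 2*d)
    (H : ∀ β γ : Fin n →₀ ℕ, β.degree = d → γ.degree = d → β + γ = μ → β = α ∨ γ = α) :
    ∃ k l, k ≠ l ∧ α = Finsupp.single l 1 + Finsupp.single k (d-1) ∧
      μ = Finsupp.single l 1 + Finsupp.single k (2*d-1) := by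
  classical
  obtain ⟨β, hβle, hβd⟩ := exists_le_deg μ d (by omega)
  have hβsum : β + (μ - β) = μ := by
    rw [add_comm]; exact tsub_add_cancel_of_le hβle
  have hγd : (μ - β).degree = d := by
    have := deg_add β (μ - β)
    rw [hβsum, hμ, hβd] at this; omega
  obtain ⟨γ₀, hγ₀d, hsum⟩ : ∃ γ₀, γ₀.degree = d ∧ α + γ₀ = μ := by
    rcases H β (μ - β) hβd hγd hβsum with h|h
    · exact ⟨μ - β, hγd, by rw [← h]; exact hβsum⟩
    · exact ⟨β, hβd, by rw [← h, add_comm]; exact hβsum⟩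
  have hsum' : ∀ m, α m + γ₀ m = μ m := fun m => DFunLike.congr_fun hsum m
  have star : ∀ k l, k ≠ l → γ₀ k ≠ 0 → α l ≠ 0 →
      (γ₀ - Finsupp.single k 1) + Finsupp.single l 1 = α := by
    intro k l hkl hγk hαl
    have hc1 : (α - Finsupp.single l 1) + Finsupp.single l 1 = α :=
      tsub_add_cancel_of_le (single_le hαl)
    have hc2 : (γ₀ - Finsupp.single k 1) + Finsupp.single k 1 = γ₀ :=
      tsub_add_cancel_of_le (single_le hγk)
    have hβ'd : ((α - Finsupp.single l 1) + Finsupp.single k 1).degree = d := by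
      have h1 := deg_add (α - Finsupp.single l 1) (Finsupp.single l 1)
      rw [hc1, hαd, deg_single] at h1
      rw [deg_add, deg_single]
      omega
    have hγ'd : ((γ₀ - Finsupp.single k 1) + Finsupp.single l 1).degree = d := by
      have h1 := deg_add (γ₀ - Finsupp.single k 1) (Finsupp.single k 1)
      rw [hc2, hγ₀d, deg_single] at h1
      rw [deg_add, deg_single]
      omega
    have hs : ((α - Finsupp.single l 1) + Finsupp.single k 1)
        + ((γ₀ - Finsupp.single k 1) + Finsupp.single l 1) = μ := by
      have : ((α - Finsupp.single l 1) + Finsupp.single k 1)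
          + ((γ₀ - Finsupp.single k 1) + Finsupp.single l 1)
          = ((α - Finsupp.single l 1) + Finsupp.single l 1)
          + ((γ₀ - Finsupp.single k 1) + Finsupp.single k 1) := by
        rw [add_add_add_comm, add_add_add_comm (α - Finsupp.single l 1) (Finsupp.single l 1),
          add_comm (Finsupp.single k 1) (Finsupp.single l 1)]
      rw [this, hc1, hc2, hsum]
    have hβ'ne : (α - Finsupp.single l 1) + Finsupp.single k 1 ≠ α := by
      intro hcon
      have h2 := DFunLike.congr_fun hcon k
      rw [Finsupp.add_apply, Finsupp.tsub_apply, Finsupp.single_eq_same,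
        Finsupp.single_eq_of_ne' (Ne.symm hkl)] at h2
      omega
    rcases H _ _ hβ'd hγ'd hs with h|h
    · exact absurd h hβ'ne
    · exact h
  obtain ⟨k₀, hk₀⟩ : ∃ k₀, γ₀ k₀ ≠ 0 := by
    by_contra hcon
    push_neg at hcon
    have hz : γ₀ = 0 := by ext m; simp [hcon m]
    rw [hz] at hγ₀d
    simp [Finsupp.degree] at hγ₀d
    omega
  have choosel : ∀ k : Fin n, ∃ l, l ≠ k ∧ α l ≠ 0 := by
    intro k
    rcases eq_or_ne i k with rfl|h
    · exact ⟨j, Ne.symm hij, hj⟩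
    · exact ⟨i, h, hi⟩
  have hγsupp : ∀ m, m ≠ k₀ → γ₀ m = 0 := by
    intro k' hk'ne
    by_contra hk'
    obtain ⟨l, hlk, hαl⟩ := choosel k₀
    obtain ⟨l', hl'k, hαl'⟩ := choosel k'
    have e1 := star k₀ l (Ne.symm hlk) hk₀ hαl
    have e2 := star k' l' (Ne.symm hl'k) hk' hαl'
    have h3 := DFunLike.congr_fun (e1.trans e2.symm) k₀
    rw [Finsupp.add_apply, Finsupp.add_apply, Finsupp.tsub_apply, Finsupp.tsub_apply,
      Finsupp.single_eq_same, Finsupp.single_eq_of_ne' hlk,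
      Finsupp.single_eq_of_ne' hk'ne] at h3
    have h4 : (Finsupp.single l' 1) k₀ ≤ 1 := by
      rcases eq_or_ne l' k₀ with rfl|hne
      · simp
      · simp [Finsupp.single_eq_of_ne' hne]
    omega
  have hγval : γ₀ k₀ = d := by
    obtain ⟨l, hlk, _⟩ := choosel k₀
    have h5 := deg_two (k := k₀) (l := l) (Ne.symm hlk)
      (fun m h1 _ => hγsupp m h1)
    rw [hγ₀d, hγsupp l hlk] at h5
    omega
  obtain ⟨l₁, hl₁k, hαl₁⟩ := choosel k₀
  have e1 := star k₀ l₁ (Ne.symm hl₁k) hk₀ hαl₁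
  have hαform : α = Finsupp.single l₁ 1 + Finsupp.single k₀ (d-1) := by
    ext m
    have h6 := DFunLike.congr_fun e1 m
    rw [Finsupp.add_apply, Finsupp.tsub_apply] at h6
    rw [Finsupp.add_apply]
    rcases eq_or_ne k₀ m with rfl|h1
    · rw [Finsupp.single_eq_same] at h6 ⊢
      rw [Finsupp.single_eq_of_ne' hl₁k] at h6 ⊢
      rw [hγval] at h6
      omega
    · rw [Finsupp.single_eq_of_ne' h1] at h6 ⊢
      rw [hγsupp m (Ne.symm h1)] at h6
      omega
  refine ⟨k₀, l₁, Ne.symm hl₁k, hαform, ?_⟩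
  ext m
  have h1 := hsum' m
  have h2 := DFunLike.congr_fun hαform m
  rw [Finsupp.add_apply] at h2 ⊢
  rcases eq_or_ne k₀ m with rfl|hm1
  · rw [Finsupp.single_eq_same] at h2 ⊢
    rw [Finsupp.single_eq_of_ne' hl₁k] at h2 ⊢
    rw [hγval] at h1
    omega
  · rw [Finsupp.single_eq_of_ne' hm1] at h2 ⊢
    rw [hγsupp m (Ne.symm hm1)] at h1
    omega


def Md (n m : ℕ) : Set (Fin n →₀ ℕ) := {α | α.degree = m}

lemma Md_finite (n m : ℕ) : (Md n m).Finite :=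
  (Finsupp.finite_of_degree_le m).subset (by intro a ha; simp only [Md, Set.mem_setOf_eq] at ha ⊢; omega)

lemma mon_injective : Function.Injective (fun α : Fin n →₀ ℕ => (monomial α (1:ℂ) : PolyR n)) :=
  monomial_left_injective one_ne_zero

lemma finrank_span_mon (s : Set (Fin n →₀ ℕ)) (hs : s.Finite) :
    finrank ℂ (Submodule.span ℂ ((fun α => (monomial α (1:ℂ) : PolyR n)) '' s)) = s.ncard := by
  classical
  have hfin : ((fun α => (monomial α (1:ℂ) : PolyR n)) '' s).Finite := hs.image _
  haveI := hfin.fintype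
  have hli : LinearIndependent ℂ
      ((↑) : ((fun α => (monomial α (1:ℂ) : PolyR n)) '' s) → PolyR n) := by
    refine (linearIndepOn_iff_image (R := ℂ) (s := s) (f := fun α => (monomial α (1:ℂ) : PolyR n)) mon_injective.injOn).1 ?_
    show LinearIndependent ℂ (fun x : s => (monomial (x : Fin n →₀ ℕ) (1:ℂ) : PolyR n))
    have heq : (fun x : s => (monomial (x : Fin n →₀ ℕ) (1:ℂ) : PolyR n))
        = (basisMonomials (Fin n) ℂ) ∘ (fun x : s => (x : Fin n →₀ ℕ)) := by
      funext x; simp [coe_basisMonomials]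
    exact heq ▸ (basisMonomials (Fin n) ℂ).linearIndependent.comp _ Subtype.coe_injective
  rw [finrank_span_set_eq_card hli, ← Set.ncard_eq_toFinset_card',
    Set.ncard_image_of_injective _ mon_injective]

lemma formSpace_eq_span (n m : ℕ) :
    formSpace n m = Submodule.span ℂ ((fun α => (monomial α (1:ℂ) : PolyR n)) '' Md n m) := by
  rw [show formSpace n m = homogeneousSubmodule (Fin n) ℂ m from rfl,
    homogeneousSubmodule_eq_finsupp_supported, AddMonoidAlgebra.supported_eq_span_single]
  congr 1

lemma finrank_formSpace (n m : ℕ) : finrank ℂ (formSpace n m) = (Md n m).ncard := by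
  rw [formSpace_eq_span, finrank_span_mon _ (Md_finite n m)]

lemma vcodim_span {n m : ℕ} (s : Set (Fin n →₀ ℕ)) (hs : s ⊆ Md n m) :
    vcodim n m (Submodule.span ℂ ((fun α => (monomial α (1:ℂ) : PolyR n)) '' s))
      = (Md n m \ s).ncard := by
  rw [vcodim, finrank_formSpace, finrank_span_mon s ((Md_finite n m).subset hs),
    Set.ncard_diff hs ((Md_finite n m).subset hs)]

open Pointwise in
lemma span_mon_mul {n : ℕ} (s t : Set (Fin n →₀ ℕ)) :
    Submodule.span ℂ ((fun α => (monomial α (1:ℂ) : PolyR n)) '' s)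
      * Submodule.span ℂ ((fun α => (monomial α (1:ℂ) : PolyR n)) '' t)
      = Submodule.span ℂ ((fun α => (monomial α (1:ℂ) : PolyR n)) '' (s + t)) := by
  rw [Submodule.span_mul_span]
  congr 1
  ext z
  constructor
  · rintro ⟨a, ⟨β, hβ, rfl⟩, b, ⟨γ, hγ, rfl⟩, rfl⟩
    exact ⟨β + γ, Set.add_mem_add hβ hγ, by simp [monomial_mul]⟩
  · rintro ⟨_, ⟨β, hβ, γ, hγ, rfl⟩, rfl⟩
    exact ⟨monomial β 1, ⟨β, hβ, rfl⟩, monomial γ 1, ⟨γ, hγ, rfl⟩, by simp [monomial_mul]⟩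

lemma sum_le_deg (β : Fin n →₀ ℕ) (s : Finset (Fin n)) : ∑ m ∈ s, β m ≤ β.degree := by
  classical
  have h1 : β.degree = ∑ m ∈ s ∪ β.support, β m := by
    rw [Finsupp.degree_apply]
    exact Finset.sum_subset Finset.subset_union_right
      (fun x _ hx => by simpa using Finsupp.notMem_support_iff.mp hx)
  rw [h1]
  exact Finset.sum_le_sum_of_subset Finset.subset_union_left

lemma ns {k l : Fin n} (hkl : k ≠ l) {β γ : Fin n →₀ ℕ}
    (hβ : β.degree = 2) (hγ : γ.degree = 2)
    (hs : β + γ = Finsupp.single l 1 + Finsupp.single k 3) :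
    β = Finsupp.single l 1 + Finsupp.single k 1 ∨
      γ = Finsupp.single l 1 + Finsupp.single k 1 := by
  have hv : ∀ m, β m + γ m = (Finsupp.single l 1) m + (Finsupp.single k 3) m := fun m => by
    have := DFunLike.congr_fun hs m
    rwa [Finsupp.add_apply, Finsupp.add_apply] at this
  have hout : ∀ m, m ≠ k → m ≠ l → β m = 0 ∧ γ m = 0 := by
    intro m h1 h2
    have := hv m
    rw [Finsupp.single_eq_of_ne' (Ne.symm h2), Finsupp.single_eq_of_ne' (Ne.symm h1)] at this
    omega
  have hβ2 : β k + β l = 2 := by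
    rw [← hβ]; exact (deg_two hkl fun m h1 h2 => (hout m h1 h2).1).symm
  have hγ2 : γ k + γ l = 2 := by
    rw [← hγ]; exact (deg_two hkl fun m h1 h2 => (hout m h1 h2).2).symm
  have hl : β l + γ l = 1 := by
    have := hv l
    rwa [Finsupp.single_eq_same, Finsupp.single_eq_of_ne' hkl, add_zero] at this
  have hk : β k + γ k = 3 := by
    have := hv k
    rwa [Finsupp.single_eq_same, Finsupp.single_eq_of_ne' (Ne.symm hkl), zero_add] at this
  have hβform := eq_two hkl fun m h1 h2 => (hout m h1 h2).1
  have hγform := eq_two hkl fun m h1 h2 => (hout m h1 h2).2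
  rcases (by omega : (β l = 1 ∧ β k = 1) ∨ (γ l = 1 ∧ γ k = 1)) with ⟨h1, h2⟩|⟨h1, h2⟩
  · left; rw [hβform, h1, h2, add_comm]
  · right; rw [hγform, h1, h2, add_comm]

end
end Aux

open MvPolynomial Module Pointwise

theorem stmt3 (n d : ℕ) (hn : 2 ≤ n) (hd : 2 ≤ d)
    (U : Submodule ℂ (PolyR n)) (hU : U ≤ formSpace n d)
    (hmon : IsMonomialSubspace n U) (hbpf : IsBPF n U)
    (hcodim : vcodim n d U = 1) :
    (d = 2 → vcodim n (2 * d) (U * U) = 0 ∨ vcodim n (2 * d) (U * U) = 2) ∧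
    (3 ≤ d → vcodim n (2 * d) (U * U) = 0 ∨ vcodim n (2 * d) (U * U) = 1) := by
  classical
  obtain ⟨S, hS⟩ := hmon
  have hSsub : S ⊆ Md n d := by
    intro α hα
    have hm : (monomial α (1:ℂ) : PolyR n) ∈ U := by
      rw [hS]; exact Submodule.subset_span ⟨α, hα, rfl⟩
    have h2 : MvPolynomial.IsHomogeneous (monomial α (1:ℂ) : PolyR n) d := hU hm
    have h3 := h2 (d := α) (by simp)
    show α.degree = d
    rw [Finsupp.degree_eq_weight_one]
    exact h3
  have hc1 : (Md n d \ S).ncard = 1 := by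
    rw [hS, vcodim_span S hSsub] at hcodim; exact hcodim
  obtain ⟨α₀, hα₀⟩ := Set.ncard_eq_one.mp hc1
  have hmem : α₀ ∈ Md n d \ S := by rw [hα₀]; exact rfl
  have hα₀d : α₀.degree = d := hmem.1
  have hα₀S : α₀ ∉ S := hmem.2
  have hSeq : S = Md n d \ {α₀} := by
    rw [← Set.diff_diff_cancel_left hSsub, hα₀]
  have hmemS : ∀ β, β ∈ S ↔ (β.degree = d ∧ β ≠ α₀) := by
    intro β
    rw [hSeq]
    constructor
    · rintro ⟨h1, h2⟩; exact ⟨h1, by simpa using h2⟩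
    · rintro ⟨h1, h2⟩; exact ⟨h1, by simpa using h2⟩
  -- base point freeness: α₀ has two distinct nonzero coordinates
  have hij : ∃ i j, i ≠ j ∧ α₀ i ≠ 0 ∧ α₀ j ≠ 0 := by
    by_contra hcon
    push_neg at hcon
    obtain ⟨i, hi⟩ : ∃ i, α₀ i ≠ 0 := by
      by_contra h0; push_neg at h0
      have hz : α₀ = 0 := by ext m; simp [h0 m]
      rw [hz] at hα₀d; simp [Finsupp.degree] at hα₀d; omega
    have hone : ∀ m, m ≠ i → α₀ m = 0 := by
      intro m hm
      exact hcon i m (Ne.symm hm) hi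
    obtain ⟨l0, hl0⟩ : ∃ l0 : Fin n, l0 ≠ i := by
      rcases eq_or_ne i ⟨0, by omega⟩ with rfl|h
      · exact ⟨⟨1, by omega⟩, by simp [Fin.ext_iff]⟩
      · exact ⟨⟨0, by omega⟩, Ne.symm h⟩
    have hαsingle : α₀ = Finsupp.single i d := by
      ext m
      rcases eq_or_ne i m with rfl|hm
      · rw [Finsupp.single_eq_same, ← hα₀d]
        have := deg_two (Ne.symm hl0) (fun m' h1 _ => hone m' h1)
        rw [hone l0 hl0] at this
        omega
      · rw [Finsupp.single_eq_of_ne' hm]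
        exact hone m (Ne.symm hm)
    set x : Fin n → ℂ := fun m => if m = i then 1 else 0 with hx
    have hx0 : ∀ p ∈ U, eval x p = 0 := by
      intro p hp
      rw [hS] at hp
      induction hp using Submodule.span_induction with
      | mem q hq =>
        obtain ⟨β, hβS, rfl⟩ := hq
        obtain ⟨hβd, hβne⟩ := (hmemS β).mp hβS
        obtain ⟨m0, hm0i, hm0⟩ : ∃ m0, m0 ≠ i ∧ β m0 ≠ 0 := by
          by_contra hcon2; push_neg at hcon2
          apply hβne
          have hβsing : β = Finsupp.single i (β i) := by
            ext m
            rcases eq_or_ne i m with rfl|hm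
            · simp
            · rw [Finsupp.single_eq_of_ne' hm]
              exact hcon2 m (Ne.symm hm)
          have hβi : β i = d := by
            have h5 := deg_single i (β i)
            rw [← hβsing] at h5
            omega
          rw [hαsingle, hβsing, hβi]
        rw [eval_monomial]
        simp only [one_mul]
        apply Finset.prod_eq_zero (Finsupp.mem_support_iff.mpr hm0)
        rw [hx]
        simp only [if_neg hm0i]
        exact zero_pow hm0
      | zero => simp
      | add a b _ _ ha hb => rw [map_add, ha, hb, add_zero]
      | smul c a _ ha => rw [smul_eval, ha, mul_zero]
    have hxz := hbpf x hx0
    have : x i = 0 := by rw [hxz]; rfl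
    rw [hx] at this; simp at this
  obtain ⟨i, j, hijne, hi, hj⟩ := hij
  -- product space
  have hUU : (U * U : Submodule ℂ (PolyR n))
      = Submodule.span ℂ ((fun α => (monomial α (1:ℂ) : PolyR n)) '' (S + S)) := by
    rw [hS, span_mon_mul]
  have hSSsub : S + S ⊆ Md n (2*d) := by
    intro μ hμ
    obtain ⟨β, hβ, γ, hγ, rfl⟩ := Set.mem_add.mp hμ
    have h1 := ((hmemS β).mp hβ).1
    have h2 := ((hmemS γ).mp hγ).1
    show (β + γ).degree = 2*d
    rw [deg_add]; omega
  have hvc : vcodim n (2*d) (U*U) = (Md n (2*d) \ (S+S)).ncard := by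
    rw [hUU, vcodim_span _ hSSsub]
  have hcompl : ∀ μ ∈ Md n (2*d) \ (S+S), ∀ β γ : Fin n →₀ ℕ,
      β.degree = d → γ.degree = d → β + γ = μ → β = α₀ ∨ γ = α₀ := by
    intro μ hμ β γ hβ hγ hsum
    by_contra hcon; push_neg at hcon
    exact hμ.2 (hsum ▸ Set.add_mem_add ((hmemS β).mpr ⟨hβ, hcon.1⟩)
      ((hmemS γ).mpr ⟨hγ, hcon.2⟩))
  constructor
  · -- d = 2
    intro hd2
    subst hd2
    right
    -- α₀ = e_i + e_j
    have hpair : α₀ i + α₀ j ≤ 2 := by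
      have := sum_le_deg α₀ {i, j}
      rwa [Finset.sum_pair hijne, hα₀d] at this
    have hout : ∀ m, m ≠ i → m ≠ j → α₀ m = 0 := by
      intro m h1 h2
      have h3 := sum_le_deg α₀ {i, j, m}
      rw [Finset.sum_insert (by simp [hijne, Ne.symm h1]),
        Finset.sum_insert (by simp [Ne.symm h2]), Finset.sum_singleton, hα₀d] at h3
      omega
    have hα₀eq : α₀ = Finsupp.single i 1 + Finsupp.single j 1 := by
      ext m
      rw [Finsupp.add_apply]
      rcases eq_or_ne i m with rfl|h1
      · rw [Finsupp.single_eq_same, Finsupp.single_eq_of_ne' (Ne.symm hijne)]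
        omega
      · rcases eq_or_ne j m with rfl|h2
        · rw [Finsupp.single_eq_same, Finsupp.single_eq_of_ne' h1]
          omega
        · rw [Finsupp.single_eq_of_ne' h1, Finsupp.single_eq_of_ne' h2,
            hout m (Ne.symm h1) (Ne.symm h2)]
          omega
    have hBsub : Md n (2*2) \ (S+S) ⊆
        {Finsupp.single i 1 + Finsupp.single j 3, Finsupp.single j 1 + Finsupp.single i 3} := by
      intro μ hμ
      obtain ⟨k, l, hkl, hα, hμf⟩ := core (by omega) α₀ μ hα₀d i j hijne hi hj hμ.1
        (hcompl μ hμ)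
      have hαval : ∀ m, α₀ m = (Finsupp.single l 1) m + (Finsupp.single k 1) m := by
        intro m
        have := DFunLike.congr_fun hα m
        rwa [Finsupp.add_apply] at this
      have hjmem : i = l ∨ i = k := by
        by_contra hcc; push_neg at hcc
        have := hαval i
        rw [Finsupp.single_eq_of_ne' (Ne.symm hcc.1), Finsupp.single_eq_of_ne' (Ne.symm hcc.2)] at this
        omega
      have himem : j = l ∨ j = k := by
        by_contra hcc; push_neg at hcc
        have := hαval j
        rw [Finsupp.single_eq_of_ne' (Ne.symm hcc.1), Finsupp.single_eq_of_ne' (Ne.symm hcc.2)] at this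
        omega
      rcases hjmem with rfl|rfl
      · -- i = l
        rcases himem with rfl|rfl
        · exact absurd rfl hijne
        · left; rw [hμf]
      · -- i = k
        rcases himem with rfl|rfl
        · right
          rw [hμf]
          rfl
        · exact absurd rfl hijne
    have hBsup : ({Finsupp.single i 1 + Finsupp.single j 3, Finsupp.single j 1 + Finsupp.single i 3}
        : Set (Fin n →₀ ℕ)) ⊆ Md n (2*2) \ (S+S) := by
      intro μ hμ
      have hdecomp : ∀ k l : Fin n, k ≠ l →
          α₀ = Finsupp.single l 1 + Finsupp.single k 1 →
          Finsupp.single l 1 + Finsupp.single k 3 ∈ Md n (2*2) \ (S+S) := by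
        intro k l hkl hαeq
        have hdeg : (Finsupp.single l 1 + Finsupp.single k 3).degree = 2*2 := by
          rw [deg_add, deg_single, deg_single]
        constructor
        · exact hdeg
        · intro hmem2
          obtain ⟨β, hβ, γ, hγ, hsum⟩ := Set.mem_add.mp hmem2
          have h1 := (hmemS β).mp hβ
          have h2 := (hmemS γ).mp hγ
          rcases ns hkl h1.1 h2.1 hsum with h|h
          · exact h1.2 (by rw [h, hαeq])
          · exact h2.2 (by rw [h, hαeq])
      rcases hμ with rfl|rfl
      · exact hdecomp j i hijne.symm (by rw [hα₀eq])
      · exact hdecomp i j hijne (by rw [hα₀eq, add_comm])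
    have hBeq := Set.Subset.antisymm hBsub hBsup
    rw [hvc, hBeq]
    apply Set.ncard_pair
    intro hcc
    have := DFunLike.congr_fun hcc i
    rw [Finsupp.add_apply, Finsupp.add_apply, Finsupp.single_eq_same,
      Finsupp.single_eq_of_ne' (Ne.symm hijne), Finsupp.single_eq_of_ne' (Ne.symm hijne),
      Finsupp.single_eq_same] at this
    omega
  · -- d ≥ 3
    intro hd3
    have hle : (Md n (2*d) \ (S+S)).ncard ≤ 1 := by
      rw [Set.ncard_le_one ((Md_finite n (2*d)).diff)]
      intro a ha b hb
      obtain ⟨k, l, hkl, hαa, hμa⟩ := core (by omega) α₀ a hα₀d i j hijne hi hj ha.1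
        (hcompl a ha)
      obtain ⟨k', l', hkl', hαb, hμb⟩ := core (by omega) α₀ b hα₀d i j hijne hi hj hb.1
        (hcompl b hb)
      have hαab := hαa.symm.trans hαb
      have hkk : k = k' := by
        by_contra hne
        have h1 := DFunLike.congr_fun hαab k
        rw [Finsupp.add_apply, Finsupp.add_apply, Finsupp.single_eq_of_ne' hkl.symm,
          Finsupp.single_eq_same, Finsupp.single_eq_of_ne' (Ne.symm hne)] at h1
        have h4 : (Finsupp.single l' 1) k ≤ 1 := by
          rcases eq_or_ne l' k with rfl|hne2
          · simp
          · rw [Finsupp.single_eq_of_ne' hne2]; omega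
        omega
      subst hkk
      have hll : l = l' := by
        by_contra hne
        have h1 := DFunLike.congr_fun hαab l
        rw [Finsupp.add_apply, Finsupp.add_apply, Finsupp.single_eq_same,
          Finsupp.single_eq_of_ne' hkl, Finsupp.single_eq_of_ne' (Ne.symm hne)] at h1
        omega
      subst hll
      rw [hμa, hμb]
    rw [hvc]
    omega
end

section
/- Let d ≥ 2 and let U ⊆ A_d be a base-point-free linear subspace of codimension 1. Then: (i) if d ≥ 3, codim U² ∈ {0, 1}; (ii) if d = 2, codim U² ≤ 2. -/
open MvPolynomial Module

open Finsupp

noncomputable section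

namespace Stmt7Aux



variable {n : ℕ}

/-- degree of exponent vector -/
abbrev dg (a : Fin n →₀ ℕ) : ℕ := Finsupp.degree a

abbrev en (i : Fin n) : Fin n →₀ ℕ := Finsupp.single i 1

lemma dg_add (a b : Fin n →₀ ℕ) : dg (a + b) = dg a + dg b := by
  simp only [dg, Finsupp.degree_eq_weight_one, map_add]

lemma dg_en (i : Fin n) : dg (en i) = 1 := by
  simp [dg, Finsupp.degree_single]

lemma dg_zero : dg (0 : Fin n →₀ ℕ) = 0 := map_zero Finsupp.degree

lemma dg_eq_zero {a : Fin n →₀ ℕ} (h : dg a = 0) : a = 0 :=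
  (Finsupp.degree_eq_zero_iff a).mp h

/-- decompose a vector of positive degree -/
lemma exists_dec {s : ℕ} {a : Fin n →₀ ℕ} (h : dg a = s + 1) :
    ∃ (i : Fin n) (m : Fin n →₀ ℕ), dg m = s ∧ a = m + en i := by
  have ha : a ≠ 0 := by
    intro h0; rw [h0, dg_zero] at h; omega
  obtain ⟨i, hi⟩ : ∃ i, a i ≠ 0 := by
    by_contra hc; push_neg at hc
    exact ha (Finsupp.ext fun i => hc i)
  refine ⟨i, a - en i, ?_, ?_⟩
  · have : a - en i + en i = a := by
      ext j
      simp only [Finsupp.coe_add, Finsupp.coe_tsub, Pi.add_apply, Pi.sub_apply]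
      rcases eq_or_ne j i with rfl | hne
      · simp [en, Finsupp.single_apply]; omega
      · simp [en, Finsupp.single_apply, Ne.symm hne]
    have h2 := dg_add (a - en i) (en i)
    rw [this, dg_en, h] at h2
    omega
  · ext j
    simp only [Finsupp.coe_add, Finsupp.coe_tsub, Pi.add_apply, Pi.sub_apply]
    rcases eq_or_ne j i with rfl | hne
    · simp [en, Finsupp.single_apply]; omega
    · simp [en, Finsupp.single_apply, Ne.symm hne]

/-- split a vector of degree s+t -/
lemma exists_split {s : ℕ} : ∀ {t : ℕ} {w : Fin n →₀ ℕ}, dg w = t + s →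
    ∃ a b, dg a = t ∧ dg b = s ∧ w = a + b := by
  induction s with
  | zero => intro t w h; exact ⟨w, 0, by simpa using h, dg_zero, by simp⟩
  | succ s ih =>
    intro t w h
    have h' : dg w = (t + s) + 1 := by omega
    obtain ⟨i, m, hm, rfl⟩ := exists_dec h'
    obtain ⟨a, b, ha, hb, rfl⟩ := ih hm
    exact ⟨a, b + en i, ha, by rw [dg_add, hb, dg_en], by rw [add_assoc]⟩

lemma prod_pow_add (m : Fin n →₀ ℕ) (i : Fin n) (c : Fin n → ℂ) :
    ((m + en i).prod fun j e => c j ^ e) = c i * m.prod fun j e => c j ^ e := by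
  rw [Finsupp.prod_add_index (fun _ _ => pow_zero _) (fun j _ e e' => pow_add (c j) e e')]
  simp [en, Finsupp.prod_single_index, mul_comm]

/-- rank-one shift structure implies eval (exponential) form -/
lemma eval_of_rank_one : ∀ (k : ℕ) (f h : (Fin n →₀ ℕ) → ℂ) (c : Fin n → ℂ),
    (∀ (i : Fin n) (m : Fin n →₀ ℕ), dg m = k → f (m + en i) = c i * h m) →
    ∃ γ : ℂ, ∀ a, dg a = k + 1 → f a = γ * a.prod fun j e => c j ^ e := by
  intro k
  induction k with
  | zero =>
    intro f h c H
    refine ⟨h 0, fun a ha => ?_⟩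
    obtain ⟨i, m, hm, rfl⟩ := exists_dec ha
    have hm0 : m = 0 := dg_eq_zero hm
    subst hm0
    rw [H i 0 dg_zero, prod_pow_add, Finsupp.prod_zero_index]
    ring
  | succ k ih =>
    intro f h c H
    by_cases hc : ∀ i, c i = 0
    · refine ⟨0, fun a ha => ?_⟩
      obtain ⟨i, m, hm, rfl⟩ := exists_dec ha
      rw [H i m hm, hc i]; ring
    · push_neg at hc
      obtain ⟨i0, hi0⟩ := hc
      have key : ∀ (j : Fin n) (m : Fin n →₀ ℕ), dg m = k →
          h (m + en j) = c j * ((c i0)⁻¹ * h (m + en i0)) := by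
        intro j m hm
        have h1 : f (m + en j + en i0) = c i0 * h (m + en j) := by
          apply H i0; rw [dg_add, hm, dg_en]
        have h2 : f (m + en i0 + en j) = c j * h (m + en i0) := by
          apply H j; rw [dg_add, hm, dg_en]
        have he : m + en j + en i0 = m + en i0 + en j := by
          rw [add_assoc, add_assoc, add_comm (en j)]
        rw [he, h2] at h1
        field_simp
        linear_combination -h1
      obtain ⟨γ, hγ⟩ := ih h (fun m => (c i0)⁻¹ * h (m + en i0)) c key
      refine ⟨γ, fun a ha => ?_⟩
      obtain ⟨i, m, hm, rfl⟩ := exists_dec ha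
      rw [H i m hm, hγ m hm, prod_pow_add]
      ring


variable {n : ℕ}

/-- pointwise-determinant dependence of two "functions at level k" -/
def Dep (k : ℕ) (f g : (Fin n →₀ ℕ) → ℂ) : Prop :=
  ∀ m m', dg m = k → dg m' = k → f m * g m' = f m' * g m

/-- the exchange conditions satisfied by the pair (λ, ℓ) coming from an
annihilator of U². -/
def Sol (k : ℕ) (lam l : (Fin n →₀ ℕ) → ℂ) : Prop :=
  ∀ (i j : Fin n) (m m' : Fin n →₀ ℕ), dg m = k → dg m' = k →
    lam (m + en i) * l (m' + en j) + l (m + en i) * lam (m' + en j) =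
    lam (m + en j) * l (m' + en i) + l (m + en j) * lam (m' + en i)

lemma uniq2 {k : ℕ} {f g : (Fin n →₀ ℕ) → ℂ} {m1 m2 : Fin n →₀ ℕ}
    (h1 : dg m1 = k) (h2 : dg m2 = k)
    (hw : f m1 * g m2 - f m2 * g m1 ≠ 0) {a b : ℂ}
    (H : ∀ x, dg x = k → a * f x + b * g x = 0) : a = 0 ∧ b = 0 := by
  have H1 := H m1 h1
  have H2 := H m2 h2
  constructor
  · have : a * (f m1 * g m2 - f m2 * g m1) = 0 := by
      linear_combination g m2 * H1 - g m1 * H2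
    exact (mul_eq_zero.mp this).resolve_right hw
  · have : b * (f m1 * g m2 - f m2 * g m1) = 0 := by
      linear_combination f m1 * H2 - f m2 * H1
    exact (mul_eq_zero.mp this).resolve_right hw

lemma contr {k : ℕ} {lam l : (Fin n →₀ ℕ) → ℂ} (hS : Sol k lam l) (i j : Fin n)
    {m1 m2 m3 : Fin n →₀ ℕ} (h1 : dg m1 = k) (h2 : dg m2 = k) (h3 : dg m3 = k)
    (w1 w2 w3 : ℂ) : ∀ x, dg x = k →
    lam (x + en i) * (w1 * l (m1 + en j) + w2 * l (m2 + en j) + w3 * l (m3 + en j))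
    + l (x + en i) * (w1 * lam (m1 + en j) + w2 * lam (m2 + en j) + w3 * lam (m3 + en j))
    - lam (x + en j) * (w1 * l (m1 + en i) + w2 * l (m2 + en i) + w3 * l (m3 + en i))
    - l (x + en j) * (w1 * lam (m1 + en i) + w2 * lam (m2 + en i) + w3 * lam (m3 + en i)) = 0 := by
  intro x hx
  linear_combination w1 * hS i j x m1 hx h1 + w2 * hS i j x m2 hx h2 + w3 * hS i j x m3 hx h3

lemma T2 {k : ℕ} {lam l : (Fin n →₀ ℕ) → ℂ} (hS : Sol k lam l) (p q r : Fin n)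
    {m1 m2 m3 : Fin n →₀ ℕ} (h1 : dg m1 = k) (h2 : dg m2 = k) (h3 : dg m3 = k)
    (hM : ((lam (m2 + en p) * lam (m3 + en q) - lam (m3 + en p) * lam (m2 + en q)) * lam (m1 + en r) + (lam (m3 + en p) * lam (m1 + en q) - lam (m1 + en p) * lam (m3 + en q)) * lam (m2 + en r) + (lam (m1 + en p) * lam (m2 + en q) - lam (m2 + en p) * lam (m1 + en q)) * lam (m3 + en r)) ≠ 0) :
    ∀ a, dg a = k + 1 → l a = 0 := by
  -- pairwise independence witnesses
  have hwpq : (lam (m1 + en p) * lam (m2 + en q) - lam (m2 + en p) * lam (m1 + en q)) ≠ 0 ∨ (lam (m1 + en p) * lam (m3 + en q) - lam (m3 + en p) * lam (m1 + en q)) ≠ 0 ∨ (lam (m2 + en p) * lam (m3 + en q) - lam (m3 + en p) * lam (m2 + en q)) ≠ 0 := by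
    by_contra hcon
    push_neg at hcon
    obtain ⟨e1, e2, e3⟩ := hcon
    exact hM (by linear_combination lam (m3 + en r) * e1 - lam (m2 + en r) * e2 + lam (m1 + en r) * e3)
  have hwpr : (lam (m1 + en p) * lam (m2 + en r) - lam (m2 + en p) * lam (m1 + en r)) ≠ 0 ∨ (lam (m1 + en p) * lam (m3 + en r) - lam (m3 + en p) * lam (m1 + en r)) ≠ 0 ∨ (lam (m2 + en p) * lam (m3 + en r) - lam (m3 + en p) * lam (m2 + en r)) ≠ 0 := by
    by_contra hcon
    push_neg at hcon
    obtain ⟨e1, e2, e3⟩ := hcon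
    exact hM (by linear_combination (-(lam (m3 + en q))) * e1 + lam (m2 + en q) * e2 - lam (m1 + en q) * e3)
  have hwqr : (lam (m1 + en q) * lam (m2 + en r) - lam (m2 + en q) * lam (m1 + en r)) ≠ 0 ∨ (lam (m1 + en q) * lam (m3 + en r) - lam (m3 + en q) * lam (m1 + en r)) ≠ 0 ∨ (lam (m2 + en q) * lam (m3 + en r) - lam (m3 + en q) * lam (m2 + en r)) ≠ 0 := by
    by_contra hcon
    push_neg at hcon
    obtain ⟨e1, e2, e3⟩ := hcon
    exact hM (by linear_combination lam (m3 + en p) * e1 - lam (m2 + en p) * e2 + lam (m1 + en p) * e3)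
  have uniqpq : ∀ a b : ℂ, (∀ x, dg x = k → a * lam (x + en p) + b * lam (x + en q) = 0) → a = 0 ∧ b = 0 := by
    intro a b H
    rcases hwpq with hw | hw | hw
    · exact uniq2 h1 h2 hw H
    · exact uniq2 h1 h3 hw H
    · exact uniq2 h2 h3 hw H
  have uniqpr : ∀ a b : ℂ, (∀ x, dg x = k → a * lam (x + en p) + b * lam (x + en r) = 0) → a = 0 ∧ b = 0 := by
    intro a b H
    rcases hwpr with hw | hw | hw
    · exact uniq2 h1 h2 hw H
    · exact uniq2 h1 h3 hw H
    · exact uniq2 h2 h3 hw H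
  have uniqqr : ∀ a b : ℂ, (∀ x, dg x = k → a * lam (x + en q) + b * lam (x + en r) = 0) → a = 0 ∧ b = 0 := by
    intro a b H
    rcases hwqr with hw | hw | hw
    · exact uniq2 h1 h2 hw H
    · exact uniq2 h1 h3 hw H
    · exact uniq2 h2 h3 hw H
  have st1 : ∀ x, dg x = k → ((lam (m2 + en p) * lam (m3 + en q) - lam (m3 + en p) * lam (m2 + en q)) * l (m1 + en q) + (lam (m3 + en p) * lam (m1 + en q) - lam (m1 + en p) * lam (m3 + en q)) * l (m2 + en q) + (lam (m1 + en p) * lam (m2 + en q) - lam (m2 + en p) * lam (m1 + en q)) * l (m3 + en q)) * lam (x + en p) + (-(((lam (m2 + en p) * lam (m3 + en q) - lam (m3 + en p) * lam (m2 + en q)) * l (m1 + en p) + (lam (m3 + en p) * lam (m1 + en q) - lam (m1 + en p) * lam (m3 + en q)) * l (m2 + en p) + (lam (m1 + en p) * lam (m2 + en q) - lam (m2 + en p) * lam (m1 + en q)) * l (m3 + en p)))) * lam (x + en q) = 0 := by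
    intro x hx
    linear_combination contr hS p q h1 h2 h3 (lam (m2 + en p) * lam (m3 + en q) - lam (m3 + en p) * lam (m2 + en q)) (lam (m3 + en p) * lam (m1 + en q) - lam (m1 + en p) * lam (m3 + en q)) (lam (m1 + en p) * lam (m2 + en q) - lam (m2 + en p) * lam (m1 + en q)) x hx
  obtain ⟨hSrq, hSrp'⟩ := uniqpq _ _ st1
  have hSrp : ((lam (m2 + en p) * lam (m3 + en q) - lam (m3 + en p) * lam (m2 + en q)) * l (m1 + en p) + (lam (m3 + en p) * lam (m1 + en q) - lam (m1 + en p) * lam (m3 + en q)) * l (m2 + en p) + (lam (m1 + en p) * lam (m2 + en q) - lam (m2 + en p) * lam (m1 + en q)) * l (m3 + en p)) = 0 := by linear_combination -hSrp'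
  have st2 : ∀ x, dg x = k → ((lam (m2 + en p) * lam (m3 + en r) - lam (m3 + en p) * lam (m2 + en r)) * l (m1 + en r) + (lam (m3 + en p) * lam (m1 + en r) - lam (m1 + en p) * lam (m3 + en r)) * l (m2 + en r) + (lam (m1 + en p) * lam (m2 + en r) - lam (m2 + en p) * lam (m1 + en r)) * l (m3 + en r)) * lam (x + en p) + (-(((lam (m2 + en p) * lam (m3 + en r) - lam (m3 + en p) * lam (m2 + en r)) * l (m1 + en p) + (lam (m3 + en p) * lam (m1 + en r) - lam (m1 + en p) * lam (m3 + en r)) * l (m2 + en p) + (lam (m1 + en p) * lam (m2 + en r) - lam (m2 + en p) * lam (m1 + en r)) * l (m3 + en p)))) * lam (x + en r) = 0 := by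
    intro x hx
    linear_combination contr hS p r h1 h2 h3 (lam (m2 + en p) * lam (m3 + en r) - lam (m3 + en p) * lam (m2 + en r)) (lam (m3 + en p) * lam (m1 + en r) - lam (m1 + en p) * lam (m3 + en r)) (lam (m1 + en p) * lam (m2 + en r) - lam (m2 + en p) * lam (m1 + en r)) x hx
  obtain ⟨hSqr, hSqp'⟩ := uniqpr _ _ st2
  have hSqp : ((lam (m2 + en p) * lam (m3 + en r) - lam (m3 + en p) * lam (m2 + en r)) * l (m1 + en p) + (lam (m3 + en p) * lam (m1 + en r) - lam (m1 + en p) * lam (m3 + en r)) * l (m2 + en p) + (lam (m1 + en p) * lam (m2 + en r) - lam (m2 + en p) * lam (m1 + en r)) * l (m3 + en p)) = 0 := by linear_combination -hSqp'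
  have st3 : ∀ x, dg x = k → ((lam (m2 + en q) * lam (m3 + en r) - lam (m3 + en q) * lam (m2 + en r)) * l (m1 + en r) + (lam (m3 + en q) * lam (m1 + en r) - lam (m1 + en q) * lam (m3 + en r)) * l (m2 + en r) + (lam (m1 + en q) * lam (m2 + en r) - lam (m2 + en q) * lam (m1 + en r)) * l (m3 + en r)) * lam (x + en q) + (-(((lam (m2 + en q) * lam (m3 + en r) - lam (m3 + en q) * lam (m2 + en r)) * l (m1 + en q) + (lam (m3 + en q) * lam (m1 + en r) - lam (m1 + en q) * lam (m3 + en r)) * l (m2 + en q) + (lam (m1 + en q) * lam (m2 + en r) - lam (m2 + en q) * lam (m1 + en r)) * l (m3 + en q)))) * lam (x + en r) = 0 := by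
    intro x hx
    linear_combination contr hS q r h1 h2 h3 (lam (m2 + en q) * lam (m3 + en r) - lam (m3 + en q) * lam (m2 + en r)) (lam (m3 + en q) * lam (m1 + en r) - lam (m1 + en q) * lam (m3 + en r)) (lam (m1 + en q) * lam (m2 + en r) - lam (m2 + en q) * lam (m1 + en r)) x hx
  obtain ⟨hSpr, hSpq'⟩ := uniqqr _ _ st3
  have hSpq : ((lam (m2 + en q) * lam (m3 + en r) - lam (m3 + en q) * lam (m2 + en r)) * l (m1 + en q) + (lam (m3 + en q) * lam (m1 + en r) - lam (m1 + en q) * lam (m3 + en r)) * l (m2 + en q) + (lam (m1 + en q) * lam (m2 + en r) - lam (m2 + en q) * lam (m1 + en r)) * l (m3 + en q)) = 0 := by linear_combination -hSpq'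
  have hlq : ∀ x, dg x = k → ((lam (m2 + en p) * lam (m3 + en q) - lam (m3 + en p) * lam (m2 + en q)) * lam (m1 + en r) + (lam (m3 + en p) * lam (m1 + en q) - lam (m1 + en p) * lam (m3 + en q)) * lam (m2 + en r) + (lam (m1 + en p) * lam (m2 + en q) - lam (m2 + en p) * lam (m1 + en q)) * lam (m3 + en r)) * l (x + en q) = -(((lam (m2 + en q) * lam (m3 + en r) - lam (m3 + en q) * lam (m2 + en r)) * l (m1 + en p) + (lam (m3 + en q) * lam (m1 + en r) - lam (m1 + en q) * lam (m3 + en r)) * l (m2 + en p) + (lam (m1 + en q) * lam (m2 + en r) - lam (m2 + en q) * lam (m1 + en r)) * l (m3 + en p))) * lam (x + en q) := by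
    intro x hx
    linear_combination (-1 : ℂ) * (contr hS p q h1 h2 h3 (lam (m2 + en q) * lam (m3 + en r) - lam (m3 + en q) * lam (m2 + en r)) (lam (m3 + en q) * lam (m1 + en r) - lam (m1 + en q) * lam (m3 + en r)) (lam (m1 + en q) * lam (m2 + en r) - lam (m2 + en q) * lam (m1 + en r)) x hx) + lam (x + en p) * hSpq
  have hlr : ∀ x, dg x = k → ((lam (m2 + en p) * lam (m3 + en q) - lam (m3 + en p) * lam (m2 + en q)) * lam (m1 + en r) + (lam (m3 + en p) * lam (m1 + en q) - lam (m1 + en p) * lam (m3 + en q)) * lam (m2 + en r) + (lam (m1 + en p) * lam (m2 + en q) - lam (m2 + en p) * lam (m1 + en q)) * lam (m3 + en r)) * l (x + en r) = -(((lam (m2 + en q) * lam (m3 + en r) - lam (m3 + en q) * lam (m2 + en r)) * l (m1 + en p) + (lam (m3 + en q) * lam (m1 + en r) - lam (m1 + en q) * lam (m3 + en r)) * l (m2 + en p) + (lam (m1 + en q) * lam (m2 + en r) - lam (m2 + en q) * lam (m1 + en r)) * l (m3 + en p))) * lam (x + en r) := by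
    intro x hx
    linear_combination (-1 : ℂ) * (contr hS p r h1 h2 h3 (lam (m2 + en q) * lam (m3 + en r) - lam (m3 + en q) * lam (m2 + en r)) (lam (m3 + en q) * lam (m1 + en r) - lam (m1 + en q) * lam (m3 + en r)) (lam (m1 + en q) * lam (m2 + en r) - lam (m2 + en q) * lam (m1 + en r)) x hx) + lam (x + en p) * hSpr
  have hlr2 : ∀ x, dg x = k → ((lam (m2 + en p) * lam (m3 + en q) - lam (m3 + en p) * lam (m2 + en q)) * lam (m1 + en r) + (lam (m3 + en p) * lam (m1 + en q) - lam (m1 + en p) * lam (m3 + en q)) * lam (m2 + en r) + (lam (m1 + en p) * lam (m2 + en q) - lam (m2 + en p) * lam (m1 + en q)) * lam (m3 + en r)) * l (x + en r) = (((lam (m2 + en p) * lam (m3 + en r) - lam (m3 + en p) * lam (m2 + en r)) * l (m1 + en q) + (lam (m3 + en p) * lam (m1 + en r) - lam (m1 + en p) * lam (m3 + en r)) * l (m2 + en q) + (lam (m1 + en p) * lam (m2 + en r) - lam (m2 + en p) * lam (m1 + en r)) * l (m3 + en q))) * lam (x + en r) := by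
    intro x hx
    linear_combination contr hS q r h1 h2 h3 (lam (m2 + en p) * lam (m3 + en r) - lam (m3 + en p) * lam (m2 + en r)) (lam (m3 + en p) * lam (m1 + en r) - lam (m1 + en p) * lam (m3 + en r)) (lam (m1 + en p) * lam (m2 + en r) - lam (m2 + en p) * lam (m1 + en r)) x hx - lam (x + en q) * hSqr
  have hlp : ∀ x, dg x = k → ((lam (m2 + en p) * lam (m3 + en q) - lam (m3 + en p) * lam (m2 + en q)) * lam (m1 + en r) + (lam (m3 + en p) * lam (m1 + en q) - lam (m1 + en p) * lam (m3 + en q)) * lam (m2 + en r) + (lam (m1 + en p) * lam (m2 + en q) - lam (m2 + en p) * lam (m1 + en q)) * lam (m3 + en r)) * l (x + en p) = (((lam (m2 + en p) * lam (m3 + en r) - lam (m3 + en p) * lam (m2 + en r)) * l (m1 + en q) + (lam (m3 + en p) * lam (m1 + en r) - lam (m1 + en p) * lam (m3 + en r)) * l (m2 + en q) + (lam (m1 + en p) * lam (m2 + en r) - lam (m2 + en p) * lam (m1 + en r)) * l (m3 + en q))) * lam (x + en p) := by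
    intro x hx
    linear_combination contr hS q p h1 h2 h3 (lam (m2 + en p) * lam (m3 + en r) - lam (m3 + en p) * lam (m2 + en r)) (lam (m3 + en p) * lam (m1 + en r) - lam (m1 + en p) * lam (m3 + en r)) (lam (m1 + en p) * lam (m2 + en r) - lam (m2 + en p) * lam (m1 + en r)) x hx - lam (x + en q) * hSqp
  have hrne : lam (m1 + en r) ≠ 0 ∨ lam (m2 + en r) ≠ 0 ∨ lam (m3 + en r) ≠ 0 := by
    by_contra hcon; push_neg at hcon; obtain ⟨e1,e2,e3⟩ := hcon
    exact hM (by linear_combination (lam (m2 + en p) * lam (m3 + en q) - lam (m3 + en p) * lam (m2 + en q)) * e1 + (lam (m3 + en p) * lam (m1 + en q) - lam (m1 + en p) * lam (m3 + en q)) * e2 + (lam (m1 + en p) * lam (m2 + en q) - lam (m2 + en p) * lam (m1 + en q)) * e3)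
  have hsum : (((lam (m2 + en q) * lam (m3 + en r) - lam (m3 + en q) * lam (m2 + en r)) * l (m1 + en p) + (lam (m3 + en q) * lam (m1 + en r) - lam (m1 + en q) * lam (m3 + en r)) * l (m2 + en p) + (lam (m1 + en q) * lam (m2 + en r) - lam (m2 + en q) * lam (m1 + en r)) * l (m3 + en p))) + (((lam (m2 + en p) * lam (m3 + en r) - lam (m3 + en p) * lam (m2 + en r)) * l (m1 + en q) + (lam (m3 + en p) * lam (m1 + en r) - lam (m1 + en p) * lam (m3 + en r)) * l (m2 + en q) + (lam (m1 + en p) * lam (m2 + en r) - lam (m2 + en p) * lam (m1 + en r)) * l (m3 + en q))) = 0 := by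
    have key : ∀ x, dg x = k → ((((lam (m2 + en q) * lam (m3 + en r) - lam (m3 + en q) * lam (m2 + en r)) * l (m1 + en p) + (lam (m3 + en q) * lam (m1 + en r) - lam (m1 + en q) * lam (m3 + en r)) * l (m2 + en p) + (lam (m1 + en q) * lam (m2 + en r) - lam (m2 + en q) * lam (m1 + en r)) * l (m3 + en p))) + (((lam (m2 + en p) * lam (m3 + en r) - lam (m3 + en p) * lam (m2 + en r)) * l (m1 + en q) + (lam (m3 + en p) * lam (m1 + en r) - lam (m1 + en p) * lam (m3 + en r)) * l (m2 + en q) + (lam (m1 + en p) * lam (m2 + en r) - lam (m2 + en p) * lam (m1 + en r)) * l (m3 + en q)))) * lam (x + en r) = 0 := by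
      intro x hx
      linear_combination hlr x hx - hlr2 x hx
    rcases hrne with hw | hw | hw
    · exact (mul_eq_zero.mp (key m1 h1)).resolve_right hw
    · exact (mul_eq_zero.mp (key m2 h2)).resolve_right hw
    · exact (mul_eq_zero.mp (key m3 h3)).resolve_right hw
  have hSpp : (((lam (m2 + en q) * lam (m3 + en r) - lam (m3 + en q) * lam (m2 + en r)) * l (m1 + en p) + (lam (m3 + en q) * lam (m1 + en r) - lam (m1 + en q) * lam (m3 + en r)) * l (m2 + en p) + (lam (m1 + en q) * lam (m2 + en r) - lam (m2 + en q) * lam (m1 + en r)) * l (m3 + en p))) = 0 := by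
    have key : ∀ x y, dg x = k → dg y = k → (2 * (((lam (m2 + en q) * lam (m3 + en r) - lam (m3 + en q) * lam (m2 + en r)) * l (m1 + en p) + (lam (m3 + en q) * lam (m1 + en r) - lam (m1 + en q) * lam (m3 + en r)) * l (m2 + en p) + (lam (m1 + en q) * lam (m2 + en r) - lam (m2 + en q) * lam (m1 + en r)) * l (m3 + en p))) * ((lam (m2 + en p) * lam (m3 + en q) - lam (m3 + en p) * lam (m2 + en q)) * lam (m1 + en r) + (lam (m3 + en p) * lam (m1 + en q) - lam (m1 + en p) * lam (m3 + en q)) * lam (m2 + en r) + (lam (m1 + en p) * lam (m2 + en q) - lam (m2 + en p) * lam (m1 + en q)) * lam (m3 + en r))) * (lam (x + en p) * lam (y + en q) - lam (y + en p) * lam (x + en q)) = 0 := by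
      intro x y hx hy
      have hq1 := hlq x hx
      have hq2 := hlq y hy
      have hp1 := hlp x hx
      have hp2 := hlp y hy
      have hSol := hS p q x y hx hy
      linear_combination (-(((lam (m2 + en p) * lam (m3 + en q) - lam (m3 + en p) * lam (m2 + en q)) * lam (m1 + en r) + (lam (m3 + en p) * lam (m1 + en q) - lam (m1 + en p) * lam (m3 + en q)) * lam (m2 + en r) + (lam (m1 + en p) * lam (m2 + en q) - lam (m2 + en p) * lam (m1 + en q)) * lam (m3 + en r)))^2) * hSol + ((lam (m2 + en p) * lam (m3 + en q) - lam (m3 + en p) * lam (m2 + en q)) * lam (m1 + en r) + (lam (m3 + en p) * lam (m1 + en q) - lam (m1 + en p) * lam (m3 + en q)) * lam (m2 + en r) + (lam (m1 + en p) * lam (m2 + en q) - lam (m2 + en p) * lam (m1 + en q)) * lam (m3 + en r)) * lam (x + en p) * hq2 + ((lam (m2 + en p) * lam (m3 + en q) - lam (m3 + en p) * lam (m2 + en q)) * lam (m1 + en r) + (lam (m3 + en p) * lam (m1 + en q) - lam (m1 + en p) * lam (m3 + en q)) * lam (m2 + en r) + (lam (m1 + en p) * lam (m2 + en q) - lam (m2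 + en p) * lam (m1 + en q)) * lam (m3 + en r)) * lam (y + en q) * hp1 - ((lam (m2 + en p) * lam (m3 + en q) - lam (m3 + en p) * lam (m2 + en q)) * lam (m1 + en r) + (lam (m3 + en p) * lam (m1 + en q) - lam (m1 + en p) * lam (m3 + en q)) * lam (m2 + en r) + (lam (m1 + en p) * lam (m2 + en q) - lam (m2 + en p) * lam (m1 + en q)) * lam (m3 + en r)) * lam (x + en q) * hp2 - ((lam (m2 + en p) * lam (m3 + en q) - lam (m3 + en p) * lam (m2 + en q)) * lam (m1 + en r) + (lam (m3 + en p) * lam (m1 + en q) - lam (m1 + en p) * lam (m3 + en q)) * lam (m2 + en r) + (lam (m1 + en p) * lam (m2 + en q) - lam (m2 + en p) * lam (m1 + en q)) * lam (m3 + en r)) * lam (y + en p) * hq1 + ((lam (m2 + en p) * lam (m3 + en q) - lam (m3 + en p) * lam (m2 + en q)) * lam (m1 + en r) + (lam (m3 + en p) * lam (m1 + en q) - lam (m1 + en p) * lam (m3 + en q)) * lam (m2 + en r) + (lam (m1 + en p) * lam (m2 + en q) - lam (m2 + en p) * lam (m1 + en q)) * lam (m3 + en r)) * (lam (x + en p)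 * lam (y + en q) - lam (y + en p) * lam (x + en q)) * hsum
    have hMM : (((lam (m2 + en q) * lam (m3 + en r) - lam (m3 + en q) * lam (m2 + en r)) * l (m1 + en p) + (lam (m3 + en q) * lam (m1 + en r) - lam (m1 + en q) * lam (m3 + en r)) * l (m2 + en p) + (lam (m1 + en q) * lam (m2 + en r) - lam (m2 + en q) * lam (m1 + en r)) * l (m3 + en p))) * (2 * ((lam (m2 + en p) * lam (m3 + en q) - lam (m3 + en p) * lam (m2 + en q)) * lam (m1 + en r) + (lam (m3 + en p) * lam (m1 + en q) - lam (m1 + en p) * lam (m3 + en q)) * lam (m2 + en r) + (lam (m1 + en p) * lam (m2 + en q) - lam (m2 + en p) * lam (m1 + en q)) * lam (m3 + en r))) = 0 := by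
      rcases hwpq with hw | hw | hw
      · have := key m1 m2 h1 h2
        rcases mul_eq_zero.mp this with h | h
        · linear_combination h
        · exact absurd h hw
      · have := key m1 m3 h1 h3
        rcases mul_eq_zero.mp this with h | h
        · linear_combination h
        · exact absurd h hw
      · have := key m2 m3 h2 h3
        rcases mul_eq_zero.mp this with h | h
        · linear_combination h
        · exact absurd h hw
    rcases mul_eq_zero.mp hMM with h | h
    · exact h
    · exact absurd (by linear_combination h / 2 : (((lam (m2 + en p) * lam (m3 + en q) - lam (m3 + en p) * lam (m2 + en q)) * lam (m1 + en r) + (lam (m3 + en p) * lam (m1 + en q) - lam (m1 + en p) * lam (m3 + en q)) * lam (m2 + en r) + (lam (m1 + en p) * lam (m2 + en q) - lam (m2 + en p) * lam (m1 + en q)) * lam (m3 + en r))) = 0) hM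
  have hlp0 : ∀ x, dg x = k → l (x + en p) = 0 := by
    intro x hx
    have h0 : ((lam (m2 + en p) * lam (m3 + en q) - lam (m3 + en p) * lam (m2 + en q)) * lam (m1 + en r) + (lam (m3 + en p) * lam (m1 + en q) - lam (m1 + en p) * lam (m3 + en q)) * lam (m2 + en r) + (lam (m1 + en p) * lam (m2 + en q) - lam (m2 + en p) * lam (m1 + en q)) * lam (m3 + en r)) * l (x + en p) = 0 := by
      rw [hlp x hx]
      linear_combination lam (x + en p) * hsum - lam (x + en p) * hSpp
    exact (mul_eq_zero.mp h0).resolve_left hM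
  have hlq0 : ∀ x, dg x = k → l (x + en q) = 0 := by
    intro x hx
    have h0 : ((lam (m2 + en p) * lam (m3 + en q) - lam (m3 + en p) * lam (m2 + en q)) * lam (m1 + en r) + (lam (m3 + en p) * lam (m1 + en q) - lam (m1 + en p) * lam (m3 + en q)) * lam (m2 + en r) + (lam (m1 + en p) * lam (m2 + en q) - lam (m2 + en p) * lam (m1 + en q)) * lam (m3 + en r)) * l (x + en q) = 0 := by
      rw [hlq x hx]
      linear_combination -lam (x + en q) * hSpp
    exact (mul_eq_zero.mp h0).resolve_left hM
  have hli : ∀ (i : Fin n) (x : Fin n →₀ ℕ), dg x = k → l (x + en i) = 0 := by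
    intro i x hx
    have c1 : ∀ y, dg y = k → ((lam (m2 + en p) * lam (m3 + en q) - lam (m3 + en p) * lam (m2 + en q)) * lam (m1 + en r) + (lam (m3 + en p) * lam (m1 + en q) - lam (m1 + en p) * lam (m3 + en q)) * lam (m2 + en r) + (lam (m1 + en p) * lam (m2 + en q) - lam (m2 + en p) * lam (m1 + en q)) * lam (m3 + en r)) * l (y + en i) - lam (y + en p) * (((lam (m2 + en q) * lam (m3 + en r) - lam (m3 + en q) * lam (m2 + en r)) * l (m1 + en i) + (lam (m3 + en q) * lam (m1 + en r) - lam (m1 + en q) * lam (m3 + en r)) * l (m2 + en i) + (lam (m1 + en q) * lam (m2 + en r) - lam (m2 + en q) * lam (m1 + en r)) * l (m3 + en i))) = 0 := by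
      intro y hy
      have C := contr hS i p h1 h2 h3 (lam (m2 + en q) * lam (m3 + en r) - lam (m3 + en q) * lam (m2 + en r)) (lam (m3 + en q) * lam (m1 + en r) - lam (m1 + en q) * lam (m3 + en r)) (lam (m1 + en q) * lam (m2 + en r) - lam (m2 + en q) * lam (m1 + en r)) y hy
      rw [hlp0 m1 h1, hlp0 m2 h2, hlp0 m3 h3, hlp0 y hy] at C
      linear_combination C
    have c2 : ∀ y, dg y = k → ((lam (m2 + en p) * lam (m3 + en q) - lam (m3 + en p) * lam (m2 + en q)) * lam (m1 + en r) + (lam (m3 + en p) * lam (m1 + en q) - lam (m1 + en p) * lam (m3 + en q)) * lam (m2 + en r) + (lam (m1 + en p) * lam (m2 + en q) - lam (m2 + en p) * lam (m1 + en q)) * lam (m3 + en r)) * l (y + en i) + lam (y + en q) * (((lam (m2 + en p) * lam (m3 + en r) - lam (m3 + en p) * lam (m2 + en r)) * l (m1 + en i) + (lam (m3 + en p) * lam (m1 + en r) - lam (m1 + en p) * lam (m3 + en r)) * l (m2 + en i) + (lam (m1 + en p) * lam (m2 + en r) - lam (m2 + en p) * lam (m1 + en r)) * l (m3 + en i)))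 = 0 := by
      intro y hy
      have C := contr hS i q h1 h2 h3 (lam (m2 + en p) * lam (m3 + en r) - lam (m3 + en p) * lam (m2 + en r)) (lam (m3 + en p) * lam (m1 + en r) - lam (m1 + en p) * lam (m3 + en r)) (lam (m1 + en p) * lam (m2 + en r) - lam (m2 + en p) * lam (m1 + en r)) y hy
      rw [hlq0 m1 h1, hlq0 m2 h2, hlq0 m3 h3, hlq0 y hy] at C
      linear_combination -C
    have c3 : ∀ y, dg y = k → (((lam (m2 + en q) * lam (m3 + en r) - lam (m3 + en q) * lam (m2 + en r)) * l (m1 + en i) + (lam (m3 + en q) * lam (m1 + en r) - lam (m1 + en q) * lam (m3 + en r)) * l (m2 + en i) + (lam (m1 + en q) * lam (m2 + en r) - lam (m2 + en q) * lam (m1 + en r)) * l (m3 + en i))) * lam (y + en p) + (((lam (m2 + en p) * lam (m3 + en r) - lam (m3 + en p) * lam (m2 + en r)) * l (m1 + en i) + (lam (m3 + en p) * lam (m1 + en r) - lam (m1 + en p) * lam (m3 + en r)) * l (m2 + en i) + (lam (m1 + en p) * lam (m2 + en r) - lam (m2 + en p) * lam (m1 + en r)) * l (m3 + en i))) * lam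 (y + en q) = 0 := by
      intro y hy
      linear_combination c2 y hy - c1 y hy
    obtain ⟨hz1, hz2⟩ := uniqpq _ _ c3
    have h0 : ((lam (m2 + en p) * lam (m3 + en q) - lam (m3 + en p) * lam (m2 + en q)) * lam (m1 + en r) + (lam (m3 + en p) * lam (m1 + en q) - lam (m1 + en p) * lam (m3 + en q)) * lam (m2 + en r) + (lam (m1 + en p) * lam (m2 + en q) - lam (m2 + en p) * lam (m1 + en q)) * lam (m3 + en r)) * l (x + en i) = 0 := by
      have := c1 x hx
      rw [hz1] at this
      linear_combination this
    exact (mul_eq_zero.mp h0).resolve_left hM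
  intro a ha
  obtain ⟨i, m, hm, rfl⟩ := exists_dec ha
  exact hli i m hm


variable {n : ℕ}

lemma solve22 {a b c d x y : ℂ} (hdet : a * d - b * c ≠ 0)
    (e1 : a * x + b * y = 0) (e2 : c * x + d * y = 0) : x = 0 ∧ y = 0 := by
  constructor
  · have hx : x * (a * d - b * c) = 0 := by linear_combination d * e1 - b * e2
    exact (mul_eq_zero.mp hx).resolve_right hdet
  · have hy : y * (a * d - b * c) = 0 := by linear_combination a * e2 - c * e1
    exact (mul_eq_zero.mp hy).resolve_right hdet

lemma perp_param {a b κ1 κ2 : ℂ} (hκ : ¬(κ1 = 0 ∧ κ2 = 0)) (h : a * κ1 + b * κ2 = 0) :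
    ∃ t, a = t * κ2 ∧ b = -t * κ1 := by
  by_cases h1 : κ1 = 0
  · have h2 : κ2 ≠ 0 := fun h2 => hκ ⟨h1, h2⟩
    refine ⟨a / κ2, by field_simp, ?_⟩
    have : b * κ2 = 0 := by rw [h1] at h; linear_combination h
    have hb : b = 0 := (mul_eq_zero.mp this).resolve_right h2
    rw [hb, h1]; ring
  · refine ⟨-b / κ1, ?_, by field_simp⟩
    rw [div_mul_eq_mul_div, eq_div_iff h1]
    linear_combination h

lemma dep3 (u1 u2 v1 v2 w1 w2 : ℂ) : ∃ x y z : ℂ, ¬(x = 0 ∧ y = 0 ∧ z = 0) ∧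
    x * u1 + y * v1 + z * w1 = 0 ∧ x * u2 + y * v2 + z * w2 = 0 := by
  by_cases hu : u1 = 0 ∧ u2 = 0
  · exact ⟨1, 0, 0, fun h => one_ne_zero h.1, by rw [hu.1]; ring, by rw [hu.2]; ring⟩
  by_cases hdet : u1 * v2 - u2 * v1 = 0
  · by_cases h1 : u1 = 0
    · have h2 : u2 ≠ 0 := fun h2 => hu ⟨h1, h2⟩
      exact ⟨v2, -u2, 0, fun h => h2 (neg_eq_zero.mp h.2.1),
        by linear_combination hdet, by ring⟩
    · exact ⟨v1, -u1, 0, fun h => h1 (neg_eq_zero.mp h.2.1),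
        by ring, by linear_combination -hdet⟩
  · exact ⟨w1 * v2 - w2 * v1, u1 * w2 - u2 * w1, -(u1 * v2 - u2 * v1),
      fun h => hdet (neg_eq_zero.mp h.2.2), by ring, by ring⟩

lemma dep4 {g : Fin 4 → ℂ} (hg : g ≠ 0) (v : Fin 4 → Fin 4 → ℂ)
    (hv : ∀ u, ∑ j, g j * v u j = 0) :
    ∃ x : Fin 4 → ℂ, (¬ ∀ u, x u = 0) ∧ ∀ j, ∑ u, x u * v u j = 0 := by
  classical
  let φ : (Fin 4 → ℂ) →ₗ[ℂ] ℂ := ∑ j : Fin 4, g j • (LinearMap.proj j)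
  have hφ : ∀ f : Fin 4 → ℂ, φ f = ∑ j, g j * f j := by
    intro f
    simp [φ, LinearMap.sum_apply]
  have hφne : φ ≠ 0 := by
    obtain ⟨j, hj⟩ : ∃ j, g j ≠ 0 := by
      by_contra hcon; push_neg at hcon; exact hg (funext hcon)
    intro h0
    apply hj
    have := congrArg (fun ψ => ψ (Pi.single j 1)) h0
    simpa [hφ, Pi.single_apply, Finset.sum_ite_eq'] using this
  have hker : finrank ℂ (LinearMap.ker φ) ≤ 3 := by
    have hrn := LinearMap.finrank_range_add_finrank_ker φ
    have hdom : finrank ℂ (Fin 4 → ℂ) = 4 := by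
      simp [Module.finrank_pi]
    have hrange : 0 < finrank ℂ (LinearMap.range φ) := by
      rw [Module.finrank_pos_iff]
      obtain ⟨f, hf⟩ : ∃ f, φ f ≠ 0 := by
        by_contra hcon; push_neg at hcon
        exact hφne (LinearMap.ext hcon)
      exact nontrivial_of_ne ⟨φ f, LinearMap.mem_range_self φ f⟩ 0 (by simp [Subtype.ext_iff, hf])
    omega
  have hVmem : ∀ u, v u ∈ LinearMap.ker φ := by
    intro u; rw [LinearMap.mem_ker, hφ]; exact hv u
  set V : Fin 4 → LinearMap.ker φ := fun u => ⟨v u, hVmem u⟩ with hV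
  have hnli : ¬ LinearIndependent ℂ V := by
    intro hli
    have := hli.fintype_card_le_finrank
    simp only [Fintype.card_fin] at this
    omega
  obtain ⟨x, hsum, u0, hu0⟩ := Fintype.not_linearIndependent_iff.mp hnli
  refine ⟨x, fun hc => hu0 (hc u0), fun j => ?_⟩
  have := congrArg (fun z : LinearMap.ker φ => (z : Fin 4 → ℂ) j) hsum
  simpa [V] using this

lemma dg_one {m : Fin n →₀ ℕ} (h : dg m = 1) : ∃ i, m = en i := by
  obtain ⟨i, m', hm', rfl⟩ := exists_dec h
  exact ⟨i, by rw [dg_eq_zero hm', zero_add]⟩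

lemma starPQ {k : ℕ} {lam l : (Fin n →₀ ℕ) → ℂ} (hS : Sol k lam l) (p q : Fin n)
    {m1 m2 : Fin n →₀ ℕ} (h1 : dg m1 = k) (h2 : dg m2 = k)
    (hD : lam (m1 + en p) * lam (m2 + en q) - lam (m2 + en p) * lam (m1 + en q) ≠ 0)
    (b b' : Fin n → ℂ)
    (hb : ∀ j m, dg m = k → l (m + en j) = b j * lam (m + en p) + b' j * lam (m + en q)) :
    b p + b' q = 0 := by
  have E := hS p q m1 m2 h1 h2
  rw [hb p m1 h1, hb p m2 h2, hb q m1 h1, hb q m2 h2] at E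
  have h0 : (b p + b' q) * (lam (m1 + en p) * lam (m2 + en q) - lam (m2 + en p) * lam (m1 + en q)) = 0 := by
    linear_combination E
  exact (mul_eq_zero.mp h0).resolve_right hD

lemma T3span {k : ℕ} {lam l : (Fin n →₀ ℕ) → ℂ} (hS : Sol k lam l) (p q : Fin n)
    {m1 m2 : Fin n →₀ ℕ} (h1 : dg m1 = k) (h2 : dg m2 = k)
    (hD : (lam (m1 + en p) * lam (m2 + en q) - lam (m2 + en p) * lam (m1 + en q)) ≠ 0)
    (c c' : Fin n → ℂ)
    (hc : ∀ i m, dg m = k → lam (m + en i) = c i * lam (m + en p) + c' i * lam (m + en q))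
    (j : Fin n) :
    ∃ b b' : ℂ, ∀ m, dg m = k → l (m + en j) = b * lam (m + en p) + b' * lam (m + en q) := by
  by_cases hall : ∀ m3, dg m3 = k →
      l (m3 + en j) * (lam (m1 + en p) * lam (m2 + en q) - lam (m2 + en p) * lam (m1 + en q))
      - (l (m1 + en j) * lam (m2 + en q) - l (m2 + en j) * lam (m1 + en q)) * lam (m3 + en p)
      - (lam (m1 + en p) * l (m2 + en j) - lam (m2 + en p) * l (m1 + en j)) * lam (m3 + en q) = 0
  · refine ⟨(l (m1 + en j) * lam (m2 + en q) - l (m2 + en j) * lam (m1 + en q)) / (lam (m1 + en p) * lam (m2 + en q) - lam (m2 + en p) * lam (m1 + en q)),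
      (lam (m1 + en p) * l (m2 + en j) - lam (m2 + en p) * l (m1 + en j)) / (lam (m1 + en p) * lam (m2 + en q) - lam (m2 + en p) * lam (m1 + en q)), fun m hm => ?_⟩
    have h0 := hall m hm
    rw [div_mul_eq_mul_div, div_mul_eq_mul_div, ← add_div, eq_div_iff hD]
    linear_combination h0
  · push_neg at hall
    obtain ⟨m3, h3, hR⟩ := hall
    exfalso
    -- the functional psi with rows (lam_p, lam_q) at (m1,m2,m3)
    have hEne : ((lam (m2 + en p) * lam (m3 + en q) - lam (m3 + en p) * lam (m2 + en q)) * l (m1 + en j) + (lam (m3 + en p) * lam (m1 + en q) - lam (m1 + en p) * lam (m3 + en q)) * l (m2 + en j) + (lam (m1 + en p) * lam (m2 + en q) - lam (m2 + en p) * lam (m1 + en q)) * l (m3 + en j)) ≠ 0 := by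
      intro h0
      exact hR (by linear_combination h0)
    have hpsil : ∀ i : Fin n, (lam (m2 + en p) * lam (m3 + en q) - lam (m3 + en p) * lam (m2 + en q)) * lam (m1 + en i) + (lam (m3 + en p) * lam (m1 + en q) - lam (m1 + en p) * lam (m3 + en q)) * lam (m2 + en i) + (lam (m1 + en p) * lam (m2 + en q) - lam (m2 + en p) * lam (m1 + en q)) * lam (m3 + en i) = 0 := by
      intro i
      rw [hc i m1 h1, hc i m2 h2, hc i m3 h3]
      ring
    have key1 : ∀ x, dg x = k → lam (x + en p) * ((lam (m2 + en p) * lam (m3 + en q) - lam (m3 + en p) * lam (m2 + en q)) * l (m1 + en j) + (lam (m3 + en p) * lam (m1 + en q) - lam (m1 + en p) * lam (m3 + en q)) * l (m2 + en j) + (lam (m1 + en p) * lam (m2 + en q) - lam (m2 + en p) * lam (m1 + en q)) * l (m3 + en j)) - lam (x + en j) * ((lam (m2 + en p) * lam (m3 + en q) - lam (m3 + en p) * lam (m2 + en q)) * l (m1 + en p) + (lam (m3 + en p) * lam (m1 + en q) - lam (m1 + en p) * lam (m3 + en q)) * l (m2 + en p) + (lam (m1 + en p) * lam (m2 + en q)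 - lam (m2 + en p) * lam (m1 + en q)) * l (m3 + en p)) = 0 := by
      intro x hx
      have C := contr hS p j h1 h2 h3 (lam (m2 + en p) * lam (m3 + en q) - lam (m3 + en p) * lam (m2 + en q)) (lam (m3 + en p) * lam (m1 + en q) - lam (m1 + en p) * lam (m3 + en q)) (lam (m1 + en p) * lam (m2 + en q) - lam (m2 + en p) * lam (m1 + en q)) x hx
      linear_combination C - l (x + en p) * hpsil j + l (x + en j) * hpsil p
    have key2 : ∀ x, dg x = k → lam (x + en q) * ((lam (m2 + en p) * lam (m3 + en q) - lam (m3 + en p) * lam (m2 + en q)) * l (m1 + en j) + (lam (m3 + en p) * lam (m1 + en q) - lam (m1 + en p) * lam (m3 + en q)) * l (m2 + en j) + (lam (m1 + en p) * lam (m2 + en q) - lam (m2 + en p) * lam (m1 + en q)) * l (m3 + en j)) - lam (x + en j) * ((lam (m2 + en p) * lam (m3 + en q) - lam (m3 + en p) * lam (m2 + en q)) * l (m1 + en q) + (lam (m3 + en p) * lam (m1 + en q) - lam (m1 + en p) * lam (m3 + en q)) * l (m2 + en q) + (lam (m1 + en p) * lam (m2 + en q) - lam (m2 + en p) * lam (m1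 + en q)) * l (m3 + en q)) = 0 := by
      intro x hx
      have C := contr hS q j h1 h2 h3 (lam (m2 + en p) * lam (m3 + en q) - lam (m3 + en p) * lam (m2 + en q)) (lam (m3 + en p) * lam (m1 + en q) - lam (m1 + en p) * lam (m3 + en q)) (lam (m1 + en p) * lam (m2 + en q) - lam (m2 + en p) * lam (m1 + en q)) x hx
      linear_combination C - l (x + en q) * hpsil j + l (x + en j) * hpsil q
    have hfin : (lam (m1 + en p) * lam (m2 + en q) - lam (m2 + en p) * lam (m1 + en q)) * (((lam (m2 + en p) * lam (m3 + en q) - lam (m3 + en p) * lam (m2 + en q)) * l (m1 + en j) + (lam (m3 + en p) * lam (m1 + en q) - lam (m1 + en p) * lam (m3 + en q)) * l (m2 + en j) + (lam (m1 + en p) * lam (m2 + en q) - lam (m2 + en p) * lam (m1 + en q)) * l (m3 + en j)) * ((lam (m2 + en p) * lam (m3 + en q) - lam (m3 + en p) * lam (m2 + en q)) * l (m1 + en j) + (lam (m3 + en p) * lam (m1 + en q) - lam (m1 + en p) * lam (m3 + en q)) * l (m2 + en j) + (lam (m1 + en p) * lam (m2 + en q) - lam (m2 + en p) * lam (m1 +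 en q)) * l (m3 + en j))) = 0 := by
      linear_combination (lam (m2 + en q) * ((lam (m2 + en p) * lam (m3 + en q) - lam (m3 + en p) * lam (m2 + en q)) * l (m1 + en j) + (lam (m3 + en p) * lam (m1 + en q) - lam (m1 + en p) * lam (m3 + en q)) * l (m2 + en j) + (lam (m1 + en p) * lam (m2 + en q) - lam (m2 + en p) * lam (m1 + en q)) * l (m3 + en j))) * key1 m1 h1 + (lam (m1 + en j) * ((lam (m2 + en p) * lam (m3 + en q) - lam (m3 + en p) * lam (m2 + en q)) * l (m1 + en p) + (lam (m3 + en p) * lam (m1 + en q) - lam (m1 + en p) * lam (m3 + en q)) * l (m2 + en p) + (lam (m1 + en p) * lam (m2 + en q) - lam (m2 + en p) * lam (m1 + en q)) * l (m3 + en p))) * key2 m2 h2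
        - (lam (m1 + en q) * ((lam (m2 + en p) * lam (m3 + en q) - lam (m3 + en p) * lam (m2 + en q)) * l (m1 + en j) + (lam (m3 + en p) * lam (m1 + en q) - lam (m1 + en p) * lam (m3 + en q)) * l (m2 + en j) + (lam (m1 + en p) * lam (m2 + en q) - lam (m2 + en p) * lam (m1 + en q)) * l (m3 + en j))) * key1 m2 h2 - (lam (m2 + en j) * ((lam (m2 + en p) * lam (m3 + en q) - lam (m3 + en p) * lam (m2 + en q)) * l (m1 + en p) + (lam (m3 + en p) * lam (m1 + en q) - lam (m1 + en p) * lam (m3 + en q)) * l (m2 + en p) + (lam (m1 + en p) * lam (m2 + en q) - lam (m2 + en p) * lam (m1 + en q)) * l (m3 + en p))) * key2 m1 h1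
    rcases mul_eq_zero.mp hfin with h | h
    · exact hD h
    · rcases mul_eq_zero.mp h with h' | h' <;> exact hEne h'


variable {n : ℕ}

lemma T3main {k' : ℕ} {lam l1 l2 : (Fin n →₀ ℕ) → ℂ}
    (hS1 : Sol (k' + 2) lam l1) (hS2 : Sol (k' + 2) lam l2) (p q : Fin n)
    {m1 m2 : Fin n →₀ ℕ} (h1 : dg m1 = k' + 2) (h2 : dg m2 = k' + 2)
    (hD : lam (m1 + en p) * lam (m2 + en q) - lam (m2 + en p) * lam (m1 + en q) ≠ 0)
    (c c' : Fin n → ℂ)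
    (hc : ∀ i m, dg m = k' + 2 → lam (m + en i) = c i * lam (m + en p) + c' i * lam (m + en q)) :
    ∃ s t : ℂ, ¬(s = 0 ∧ t = 0) ∧ ∀ a, dg a = k' + 2 + 1 → s * l1 a + t * l2 a = 0 := by
  have hDs : lam (m1 + en p) * lam (m2 + en q) - lam (m1 + en q) * lam (m2 + en p) ≠ 0 := by
    intro h0; exact hD (by linear_combination h0)
  have hcp : c p = 1 ∧ c' p = 0 := by
    have h := solve22 hDs (x := c p - 1) (y := c' p)
      (by linear_combination -(hc p m1 h1)) (by linear_combination -(hc p m2 h2))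
    exact ⟨by linear_combination h.1, h.2⟩
  have hcq : c q = 0 ∧ c' q = 1 := by
    have h := solve22 hDs (x := c q) (y := c' q - 1)
      (by linear_combination -(hc q m1 h1)) (by linear_combination -(hc q m2 h2))
    exact ⟨h.1, by linear_combination h.2⟩
  choose b1 b1' hb1 using fun j => T3span hS1 p q h1 h2 hD c c' hc j
  choose b2 b2' hb2 using fun j => T3span hS2 p q h1 h2 hD c c' hc j
  have hst1 : b1 p + b1' q = 0 := starPQ hS1 p q h1 h2 hD b1 b1' hb1
  have hst2 : b2 p + b2' q = 0 := starPQ hS2 p q h1 h2 hD b2 b2' hb2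
  have hic1 : ∀ (i j : Fin n) m, dg m = k' + 1 →
      b1 i * lam (m + en j + en p) + b1' i * lam (m + en j + en q) =
      b1 j * lam (m + en i + en p) + b1' j * lam (m + en i + en q) := by
    intro i j m hm
    have hmj : dg (m + en j) = k' + 2 := by rw [dg_add, hm, dg_en]
    have hmi : dg (m + en i) = k' + 2 := by rw [dg_add, hm, dg_en]
    have A := hb1 i (m + en j) hmj
    have B := hb1 j (m + en i) hmi
    rw [show m + en j + en i = m + en i + en j from add_right_comm m (en j) (en i)] at A
    linear_combination B - A
  have hic2 : ∀ (i j : Fin n) m, dg m = k' + 1 →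
      b2 i * lam (m + en j + en p) + b2' i * lam (m + en j + en q) =
      b2 j * lam (m + en i + en p) + b2' j * lam (m + en i + en q) := by
    intro i j m hm
    have hmj : dg (m + en j) = k' + 2 := by rw [dg_add, hm, dg_en]
    have hmi : dg (m + en i) = k' + 2 := by rw [dg_add, hm, dg_en]
    have A := hb2 i (m + en j) hmj
    have B := hb2 j (m + en i) hmi
    rw [show m + en j + en i = m + en i + en j from add_right_comm m (en j) (en i)] at A
    linear_combination B - A
  have hicw : ∀ (i j : Fin n) m, dg m = k' + 1 →
      c i * lam (m + en j + en p) + c' i * lam (m + en j + en q) =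
      c j * lam (m + en i + en p) + c' j * lam (m + en i + en q) := by
    intro i j m hm
    have hmj : dg (m + en j) = k' + 2 := by rw [dg_add, hm, dg_en]
    have hmi : dg (m + en i) = k' + 2 := by rw [dg_add, hm, dg_en]
    have A := hc i (m + en j) hmj
    have B := hc j (m + en i) hmi
    rw [show m + en j + en i = m + en i + en j from add_right_comm m (en j) (en i)] at A
    linear_combination B - A
  by_cases hsub : ∃ (i0 : Fin n) (μ1 μ2 : Fin n →₀ ℕ), dg μ1 = k' + 1 ∧ dg μ2 = k' + 1 ∧
      lam (μ1 + en i0 + en p) * lam (μ2 + en i0 + en q) -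
        lam (μ1 + en i0 + en q) * lam (μ2 + en i0 + en p) ≠ 0
  · obtain ⟨i0, μ1, μ2, hμ1, hμ2, hw⟩ := hsub
    obtain ⟨x1, x2, x3, hnt, he1, he2⟩ :=
      dep3 (b1 i0) (b1' i0) (b2 i0) (b2' i0) (c i0) (c' i0)
    have hBj : ∀ j, (x1 * b1 j + x2 * b2 j + x3 * c j = 0) ∧
        (x1 * b1' j + x2 * b2' j + x3 * c' j = 0) := by
      intro j
      have key : ∀ x, dg x = k' + 1 →
          lam (x + en i0 + en p) * (x1 * b1 j + x2 * b2 j + x3 * c j) +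
          lam (x + en i0 + en q) * (x1 * b1' j + x2 * b2' j + x3 * c' j) = 0 := by
        intro x hx
        linear_combination x1 * hic1 j i0 x hx + x2 * hic2 j i0 x hx + x3 * hicw j i0 x hx
          + lam (x + en j + en p) * he1 + lam (x + en j + en q) * he2
      exact solve22 hw (key μ1 hμ1) (key μ2 hμ2)
    have h2x3 : x3 * 2 = 0 := by
      have e1 := (hBj p).1
      have e2 := (hBj q).2
      rw [hcp.1] at e1
      rw [hcq.2] at e2
      linear_combination e1 + e2 - x1 * hst1 - x2 * hst2
    have hx3 : x3 = 0 := by linear_combination h2x3 / 2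
    refine ⟨x1, x2, fun hc12 => hnt ⟨hc12.1, hc12.2, hx3⟩, fun a ha => ?_⟩
    obtain ⟨i, m, hm, rfl⟩ := exists_dec ha
    have e1 := (hBj i).1
    have e2 := (hBj i).2
    rw [hx3] at e1 e2
    rw [hb1 i m hm, hb2 i m hm]
    linear_combination lam (m + en p) * e1 + lam (m + en q) * e2
  · push_neg at hsub
    have hKH : ∀ i : Fin n, ∃ κ1 κ2 : ℂ, ∃ H : (Fin n →₀ ℕ) → ℂ,
        (∀ m, dg m = k' + 1 → lam (m + en i + en p) = κ1 * H m ∧ lam (m + en i + en q) = κ2 * H m)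
        ∧ (¬(κ1 = 0 ∧ κ2 = 0) → ∃ m0, dg m0 = k' + 1 ∧ H m0 ≠ 0) := by
      intro i
      by_cases hgp : ∃ m0, dg m0 = k' + 1 ∧ lam (m0 + en i + en p) ≠ 0
      · obtain ⟨m0, hm0, hne⟩ := hgp
        refine ⟨1, lam (m0 + en i + en q) / lam (m0 + en i + en p), fun m => lam (m + en i + en p),
          fun m hm => ⟨by ring, ?_⟩, fun _ => ⟨m0, hm0, hne⟩⟩
        have h0 := hsub i m m0 hm hm0
        field_simp
        linear_combination -h0
      · push_neg at hgp
        by_cases hgq : ∃ m0, dg m0 = k' + 1 ∧ lam (m0 + en i + en q) ≠ 0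
        · obtain ⟨m0, hm0, hne⟩ := hgq
          exact ⟨0, 1, fun m => lam (m + en i + en q),
            fun m hm => ⟨by rw [hgp m hm]; ring, by ring⟩, fun _ => ⟨m0, hm0, hne⟩⟩
        · push_neg at hgq
          exact ⟨0, 0, fun _ => 0, fun m hm => ⟨by rw [hgp m hm]; ring, by rw [hgq m hm]; ring⟩,
            fun hcon => absurd ⟨rfl, rfl⟩ hcon⟩
    choose κ1 κ2 Hf hKH' using hKH
    have hP1 : ∀ (i : Fin n) m, dg m = k' + 1 →
        lam (m + en i + en p) = κ1 i * Hf i m ∧ lam (m + en i + en q) = κ2 i * Hf i m :=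
      fun i => (hKH' i).1
    have hP4 : ∀ i : Fin n, ¬(κ1 i = 0 ∧ κ2 i = 0) → ∃ m0, dg m0 = k' + 1 ∧ Hf i m0 ≠ 0 :=
      fun i => (hKH' i).2
    have hsel : ∃ iS jS : Fin n, κ1 iS * κ2 jS - κ2 iS * κ1 jS ≠ 0 := by
      by_contra hcon
      push_neg at hcon
      apply hD
      by_cases hall0 : ∃ i1 : Fin n, κ1 i1 ≠ 0 ∨ κ2 i1 ≠ 0
      · obtain ⟨i1, hi1⟩ := hall0
        have hrel : ∀ x, dg x = k' + 2 → κ2 i1 * lam (x + en p) = κ1 i1 * lam (x + en q) := by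
          intro x hx
          obtain ⟨i, m, hm, rfl⟩ := exists_dec hx
          rw [(hP1 i m hm).1, (hP1 i m hm).2]
          linear_combination (-(Hf i m)) * hcon i1 i
        have r1 := hrel m1 h1
        have r2 := hrel m2 h2
        rcases hi1 with hκ | hκ
        · have h0 : (lam (m1 + en p) * lam (m2 + en q) - lam (m2 + en p) * lam (m1 + en q)) * κ1 i1 = 0 := by
            linear_combination lam (m2 + en p) * r1 - lam (m1 + en p) * r2
          exact (mul_eq_zero.mp h0).resolve_right hκ
        · have h0 : (lam (m1 + en p) * lam (m2 + en q) - lam (m2 + en p) * lam (m1 + en q)) * κ2 i1 = 0 := by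
            linear_combination lam (m2 + en q) * r1 - lam (m1 + en q) * r2
          exact (mul_eq_zero.mp h0).resolve_right hκ
      · push_neg at hall0
        have hz : ∀ x, dg x = k' + 2 → lam (x + en p) = 0 := by
          intro x hx
          obtain ⟨i, m, hm, rfl⟩ := exists_dec hx
          have h0 := (hP1 i m hm).1
          rw [(hall0 i).1] at h0
          rw [h0]; ring
        rw [hz m1 h1, hz m2 h2]; ring
    obtain ⟨iS, jS, hdet⟩ := hsel
    have hκiS : ¬(κ1 iS = 0 ∧ κ2 iS = 0) := fun hcc => hdet (by rw [hcc.1, hcc.2]; ring)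
    have hκjS : ¬(κ1 jS = 0 ∧ κ2 jS = 0) := fun hcc => hdet (by rw [hcc.1, hcc.2]; ring)
    obtain ⟨m0, hm0, hH0⟩ := hP4 iS hκiS
    obtain ⟨m0', hm0', hH0'⟩ := hP4 jS hκjS
    have hick1 : ∀ (i j : Fin n) m, dg m = k' + 1 →
        (b1 i * κ1 j + b1' i * κ2 j) * Hf j m = (b1 j * κ1 i + b1' j * κ2 i) * Hf i m := by
      intro i j m hm
      have A := hic1 i j m hm
      rw [(hP1 j m hm).1, (hP1 j m hm).2, (hP1 i m hm).1, (hP1 i m hm).2] at A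
      linear_combination A
    have hick2 : ∀ (i j : Fin n) m, dg m = k' + 1 →
        (b2 i * κ1 j + b2' i * κ2 j) * Hf j m = (b2 j * κ1 i + b2' j * κ2 i) * Hf i m := by
      intro i j m hm
      have A := hic2 i j m hm
      rw [(hP1 j m hm).1, (hP1 j m hm).2, (hP1 i m hm).1, (hP1 i m hm).2] at A
      linear_combination A
    have hickw : ∀ (i j : Fin n) m, dg m = k' + 1 →
        (c i * κ1 j + c' i * κ2 j) * Hf j m = (c j * κ1 i + c' j * κ2 i) * Hf i m := by
      intro i j m hm
      have A := hicw i j m hm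
      rw [(hP1 j m hm).1, (hP1 j m hm).2, (hP1 i m hm).1, (hP1 i m hm).2] at A
      linear_combination A
    by_cases hHH : ∃ μ1 μ2 : Fin n →₀ ℕ, dg μ1 = k' + 1 ∧ dg μ2 = k' + 1 ∧
        Hf jS μ1 * Hf iS μ2 - Hf iS μ1 * Hf jS μ2 ≠ 0
    · obtain ⟨μ1, μ2, hν1, hν2, hwH⟩ := hHH
      have hperp : ∀ (b b' : Fin n → ℂ),
          (∀ (i j : Fin n) m, dg m = k' + 1 →
            (b i * κ1 j + b' i * κ2 j) * Hf j m = (b j * κ1 i + b' j * κ2 i) * Hf i m) →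
          (b iS * κ1 jS + b' iS * κ2 jS = 0) ∧ (b jS * κ1 iS + b' jS * κ2 iS = 0) := by
        intro b b' hick
        have h := solve22 hwH (x := b iS * κ1 jS + b' iS * κ2 jS) (y := -(b jS * κ1 iS + b' jS * κ2 iS))
          (by linear_combination hick iS jS μ1 hν1) (by linear_combination hick iS jS μ2 hν2)
        exact ⟨h.1, neg_eq_zero.mp h.2⟩
      obtain ⟨hp1a, hp1b⟩ := hperp b1 b1' hick1
      obtain ⟨hp2a, hp2b⟩ := hperp b2 b2' hick2
      obtain ⟨hpwa, hpwb⟩ := hperp c c' hickw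
      obtain ⟨t1, ht1, ht1'⟩ := perp_param hκjS hp1a
      obtain ⟨t2, ht2, ht2'⟩ := perp_param hκjS hp2a
      obtain ⟨t3, ht3, ht3'⟩ := perp_param hκjS hpwa
      obtain ⟨s1, hs1, hs1'⟩ := perp_param hκiS hp1b
      obtain ⟨s2, hs2, hs2'⟩ := perp_param hκiS hp2b
      obtain ⟨s3, hs3, hs3'⟩ := perp_param hκiS hpwb
      obtain ⟨x1, x2, x3, hnt, he1, he2⟩ := dep3 t1 s1 t2 s2 t3 s3
      have hBiS : x1 * b1 iS + x2 * b2 iS + x3 * c iS = 0 := by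
        rw [ht1, ht2, ht3]; linear_combination κ2 jS * he1
      have hBiS' : x1 * b1' iS + x2 * b2' iS + x3 * c' iS = 0 := by
        rw [ht1', ht2', ht3']; linear_combination (-(κ1 jS)) * he1
      have hBjS : x1 * b1 jS + x2 * b2 jS + x3 * c jS = 0 := by
        rw [hs1, hs2, hs3]; linear_combination κ2 iS * he2
      have hBjS' : x1 * b1' jS + x2 * b2' jS + x3 * c' jS = 0 := by
        rw [hs1', hs2', hs3']; linear_combination (-(κ1 iS)) * he2
      have eIS : ∀ j : Fin n, κ1 iS * (x1 * b1 j + x2 * b2 j + x3 * c j) + κ2 iS * (x1 * b1' j + x2 * b2' j + x3 * c' j) = 0 := by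
        intro j
        have key : (κ1 iS * (x1 * b1 j + x2 * b2 j + x3 * c j) + κ2 iS * (x1 * b1' j + x2 * b2' j + x3 * c' j)) * Hf iS m0 = 0 := by
          linear_combination x1 * hick1 j iS m0 hm0 + x2 * hick2 j iS m0 hm0 + x3 * hickw j iS m0 hm0 + Hf j m0 * κ1 j * hBiS + Hf j m0 * κ2 j * hBiS'
        exact (mul_eq_zero.mp key).resolve_right hH0
      have eJS : ∀ j : Fin n, κ1 jS * (x1 * b1 j + x2 * b2 j + x3 * c j) + κ2 jS * (x1 * b1' j + x2 * b2' j + x3 * c' j) = 0 := by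
        intro j
        have key : (κ1 jS * (x1 * b1 j + x2 * b2 j + x3 * c j) + κ2 jS * (x1 * b1' j + x2 * b2' j + x3 * c' j)) * Hf jS m0' = 0 := by
          linear_combination x1 * hick1 j jS m0' hm0' + x2 * hick2 j jS m0' hm0' + x3 * hickw j jS m0' hm0' + Hf j m0' * κ1 j * hBjS + Hf j m0' * κ2 j * hBjS'
        exact (mul_eq_zero.mp key).resolve_right hH0'
      have hBj : ∀ j, (x1 * b1 j + x2 * b2 j + x3 * c j = 0) ∧ (x1 * b1' j + x2 * b2' j + x3 * c' j = 0) := by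
        intro j
        exact solve22 hdet (eIS j) (eJS j)
      have h2x3 : x3 * 2 = 0 := by
        have e1 := (hBj p).1
        have e2 := (hBj q).2
        rw [hcp.1] at e1
        rw [hcq.2] at e2
        linear_combination e1 + e2 - x1 * hst1 - x2 * hst2
      have hx3 : x3 = 0 := by linear_combination h2x3 / 2
      refine ⟨x1, x2, fun hc12 => hnt ⟨hc12.1, hc12.2, hx3⟩, fun a ha => ?_⟩
      obtain ⟨i, m, hm, rfl⟩ := exists_dec ha
      have e1 := (hBj i).1
      have e2 := (hBj i).2
      rw [hx3] at e1 e2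
      rw [hb1 i m hm, hb2 i m hm]
      linear_combination lam (m + en p) * e1 + lam (m + en q) * e2
    · push_neg at hHH
      have hjm0eq : Hf jS m0' * Hf iS m0 - Hf iS m0' * Hf jS m0 = 0 := hHH m0' m0 hm0' hm0
      have hjm0 : Hf jS m0 ≠ 0 := by
        intro h0
        apply mul_ne_zero hH0' hH0
        linear_combination hjm0eq + Hf iS m0' * h0
      have hcH : ∀ m, dg m = k' + 1 → Hf jS m = Hf jS m0 / Hf iS m0 * Hf iS m := by
        intro m hm
        have h0 := hHH m m0 hm hm0
        field_simp
        linear_combination h0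
      by_cases hj0 : ∃ (j0 : Fin n) (μ1 μ2 : Fin n →₀ ℕ), (¬(κ1 j0 = 0 ∧ κ2 j0 = 0)) ∧
          dg μ1 = k' + 1 ∧ dg μ2 = k' + 1 ∧ Hf j0 μ1 * Hf iS μ2 - Hf iS μ1 * Hf j0 μ2 ≠ 0
      · obtain ⟨j0, μ1, μ2, hκj0, hν1, hν2, hwH⟩ := hj0
        have hperp : ∀ (b b' : Fin n → ℂ),
            (∀ (i j : Fin n) m, dg m = k' + 1 →
              (b i * κ1 j + b' i * κ2 j) * Hf j m = (b j * κ1 i + b' j * κ2 i) * Hf i m) →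
            (b iS * κ1 j0 + b' iS * κ2 j0 = 0) ∧ (b jS * κ1 j0 + b' jS * κ2 j0 = 0) := by
          intro b b' hick
          constructor
          · exact (solve22 hwH (x := b iS * κ1 j0 + b' iS * κ2 j0) (y := -(b j0 * κ1 iS + b' j0 * κ2 iS))
              (by linear_combination hick iS j0 μ1 hν1) (by linear_combination hick iS j0 μ2 hν2)).1
          · exact (solve22 hwH (x := b jS * κ1 j0 + b' jS * κ2 j0)
              (y := -((b j0 * κ1 jS + b' j0 * κ2 jS) * (Hf jS m0 / Hf iS m0)))
              (by linear_combination hick jS j0 μ1 hν1 + (b j0 * κ1 jS + b' j0 * κ2 jS) * hcH μ1 hν1)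
              (by linear_combination hick jS j0 μ2 hν2 + (b j0 * κ1 jS + b' j0 * κ2 jS) * hcH μ2 hν2)).1
        obtain ⟨hp1a, hp1b⟩ := hperp b1 b1' hick1
        obtain ⟨hp2a, hp2b⟩ := hperp b2 b2' hick2
        obtain ⟨hpwa, hpwb⟩ := hperp c c' hickw
        obtain ⟨t1, ht1, ht1'⟩ := perp_param hκj0 hp1a
        obtain ⟨t2, ht2, ht2'⟩ := perp_param hκj0 hp2a
        obtain ⟨t3, ht3, ht3'⟩ := perp_param hκj0 hpwa
        obtain ⟨s1, hs1, hs1'⟩ := perp_param hκj0 hp1b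
        obtain ⟨s2, hs2, hs2'⟩ := perp_param hκj0 hp2b
        obtain ⟨s3, hs3, hs3'⟩ := perp_param hκj0 hpwb
        obtain ⟨x1, x2, x3, hnt, he1, he2⟩ := dep3 t1 s1 t2 s2 t3 s3
        have hBiS : x1 * b1 iS + x2 * b2 iS + x3 * c iS = 0 := by
          rw [ht1, ht2, ht3]; linear_combination κ2 j0 * he1
        have hBiS' : x1 * b1' iS + x2 * b2' iS + x3 * c' iS = 0 := by
          rw [ht1', ht2', ht3']; linear_combination (-(κ1 j0)) * he1
        have hBjS : x1 * b1 jS + x2 * b2 jS + x3 * c jS = 0 := by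
          rw [hs1, hs2, hs3]; linear_combination κ2 j0 * he2
        have hBjS' : x1 * b1' jS + x2 * b2' jS + x3 * c' jS = 0 := by
          rw [hs1', hs2', hs3']; linear_combination (-(κ1 j0)) * he2
        have eIS : ∀ j : Fin n, κ1 iS * (x1 * b1 j + x2 * b2 j + x3 * c j) + κ2 iS * (x1 * b1' j + x2 * b2' j + x3 * c' j) = 0 := by
          intro j
          have key : (κ1 iS * (x1 * b1 j + x2 * b2 j + x3 * c j) + κ2 iS * (x1 * b1' j + x2 * b2' j + x3 * c' j)) * Hf iS m0 = 0 := by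
            linear_combination x1 * hick1 j iS m0 hm0 + x2 * hick2 j iS m0 hm0 + x3 * hickw j iS m0 hm0 + Hf j m0 * κ1 j * hBiS + Hf j m0 * κ2 j * hBiS'
          exact (mul_eq_zero.mp key).resolve_right hH0
        have eJS : ∀ j : Fin n, κ1 jS * (x1 * b1 j + x2 * b2 j + x3 * c j) + κ2 jS * (x1 * b1' j + x2 * b2' j + x3 * c' j) = 0 := by
          intro j
          have key : (κ1 jS * (x1 * b1 j + x2 * b2 j + x3 * c j) + κ2 jS * (x1 * b1' j + x2 * b2' j + x3 * c' j)) * Hf jS m0' = 0 := by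
            linear_combination x1 * hick1 j jS m0' hm0' + x2 * hick2 j jS m0' hm0' + x3 * hickw j jS m0' hm0' + Hf j m0' * κ1 j * hBjS + Hf j m0' * κ2 j * hBjS'
          exact (mul_eq_zero.mp key).resolve_right hH0'
        have hBj : ∀ j, (x1 * b1 j + x2 * b2 j + x3 * c j = 0) ∧ (x1 * b1' j + x2 * b2' j + x3 * c' j = 0) := by
          intro j
          exact solve22 hdet (eIS j) (eJS j)
        have h2x3 : x3 * 2 = 0 := by
          have e1 := (hBj p).1
          have e2 := (hBj q).2
          rw [hcp.1] at e1
          rw [hcq.2] at e2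
          linear_combination e1 + e2 - x1 * hst1 - x2 * hst2
        have hx3 : x3 = 0 := by linear_combination h2x3 / 2
        refine ⟨x1, x2, fun hc12 => hnt ⟨hc12.1, hc12.2, hx3⟩, fun a ha => ?_⟩
        obtain ⟨i, m, hm, rfl⟩ := exists_dec ha
        have e1 := (hBj i).1
        have e2 := (hBj i).2
        rw [hx3] at e1 e2
        rw [hb1 i m hm, hb2 i m hm]
        linear_combination lam (m + en p) * e1 + lam (m + en q) * e2
      · exfalso
        push_neg at hj0
        have hab : ∀ j : Fin n, ∃ a b : ℂ, ∀ m, dg m = k' + 1 →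
            lam (m + en j + en p) = a * Hf iS m ∧ lam (m + en j + en q) = b * Hf iS m := by
          intro j
          by_cases hκj : κ1 j = 0 ∧ κ2 j = 0
          · refine ⟨0, 0, fun m hm => ⟨?_, ?_⟩⟩
            · rw [(hP1 j m hm).1, hκj.1]; ring
            · rw [(hP1 j m hm).2, hκj.2]; ring
          · refine ⟨κ1 j * (Hf j m0 / Hf iS m0), κ2 j * (Hf j m0 / Hf iS m0), fun m hm => ⟨?_, ?_⟩⟩
            · rw [(hP1 j m hm).1]
              have h0 := hj0 j m m0 (fun hh1 hh2 => hκj ⟨hh1, hh2⟩) hm hm0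
              field_simp
              linear_combination κ1 j * h0
            · rw [(hP1 j m hm).2]
              have h0 := hj0 j m m0 (fun hh1 hh2 => hκj ⟨hh1, hh2⟩) hm hm0
              field_simp
              linear_combination κ2 j * h0
        choose α β hab' using hab
        have haiS : α iS = κ1 iS ∧ β iS = κ2 iS := by
          constructor
          · have e1 := (hab' iS m0 hm0).1
            have e2 := (hP1 iS m0 hm0).1
            have h0 : (α iS - κ1 iS) * Hf iS m0 = 0 := by linear_combination e2 - e1
            have := (mul_eq_zero.mp h0).resolve_right hH0
            linear_combination this
          · have e1 := (hab' iS m0 hm0).2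
            have e2 := (hP1 iS m0 hm0).2
            have h0 : (β iS - κ2 iS) * Hf iS m0 = 0 := by linear_combination e2 - e1
            have := (mul_eq_zero.mp h0).resolve_right hH0
            linear_combination this
        have hajS : α jS = κ1 jS * (Hf jS m0 / Hf iS m0) ∧ β jS = κ2 jS * (Hf jS m0 / Hf iS m0) := by
          have hcH0 := hcH m0 hm0
          constructor
          · have e1 := (hab' jS m0 hm0).1
            have e2 := (hP1 jS m0 hm0).1
            have h0 : (α jS - κ1 jS * (Hf jS m0 / Hf iS m0)) * Hf iS m0 = 0 := by
              linear_combination e2 - e1 + κ1 jS * hcH0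
            have := (mul_eq_zero.mp h0).resolve_right hH0
            linear_combination this
          · have e1 := (hab' jS m0 hm0).2
            have e2 := (hP1 jS m0 hm0).2
            have h0 : (β jS - κ2 jS * (Hf jS m0 / Hf iS m0)) * Hf iS m0 = 0 := by
              linear_combination e2 - e1 + κ2 jS * hcH0
            have := (mul_eq_zero.mp h0).resolve_right hH0
            linear_combination this
        have hglueα : ∀ (j1 j2 : Fin n) m, dg m = k' →
            α j1 * Hf iS (m + en j2) = α j2 * Hf iS (m + en j1) := by
          intro j1 j2 m hm
          have hmj2 : dg (m + en j2) = k' + 1 := by rw [dg_add, hm, dg_en]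
          have hmj1 : dg (m + en j1) = k' + 1 := by rw [dg_add, hm, dg_en]
          have A := (hab' j1 (m + en j2) hmj2).1
          have B := (hab' j2 (m + en j1) hmj1).1
          rw [show m + en j2 + en j1 + en p = m + en j1 + en j2 + en p from by
            rw [add_right_comm m (en j2) (en j1)]] at A
          linear_combination B - A
        have hglueβ : ∀ (j1 j2 : Fin n) m, dg m = k' →
            β j1 * Hf iS (m + en j2) = β j2 * Hf iS (m + en j1) := by
          intro j1 j2 m hm
          have hmj2 : dg (m + en j2) = k' + 1 := by rw [dg_add, hm, dg_en]
          have hmj1 : dg (m + en j1) = k' + 1 := by rw [dg_add, hm, dg_en]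
          have A := (hab' j1 (m + en j2) hmj2).2
          have B := (hab' j2 (m + en j1) hmj1).2
          rw [show m + en j2 + en j1 + en q = m + en j1 + en j2 + en q from by
            rw [add_right_comm m (en j2) (en j1)]] at A
          linear_combination B - A
        have hqne : Hf jS m0 / Hf iS m0 ≠ 0 := div_ne_zero hjm0 hH0
        have hdet2 : α iS * β jS - β iS * α jS ≠ 0 := by
          rw [haiS.1, haiS.2, hajS.1, hajS.2]
          intro h0
          apply hdet
          have h1 : (κ1 iS * κ2 jS - κ2 iS * κ1 jS) * (Hf jS m0 / Hf iS m0) = 0 := by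
            linear_combination h0
          exact (mul_eq_zero.mp h1).resolve_right hqne
        have hkill : ∀ m, dg m = k' → Hf iS (m + en jS) = 0 ∧ Hf iS (m + en iS) = 0 := by
          intro m hm
          refine solve22 (a := α iS) (b := -(α jS)) (c := β iS) (d := -(β jS)) ?_ ?_ ?_
          · intro h0; exact hdet2 (by linear_combination -h0)
          · linear_combination hglueα iS jS m hm
          · linear_combination hglueβ iS jS m hm
        have hzero : ∀ (s : Fin n) m, dg m = k' → Hf iS (m + en s) = 0 := by
          intro s m hm
          rcases not_and_or.mp hκiS with hκ | hκ
          · have h0 := hglueα iS s m hm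
            rw [(hkill m hm).2] at h0
            have h1 : α iS * Hf iS (m + en s) = 0 := by rw [h0]; ring
            have hαne : α iS ≠ 0 := by rw [haiS.1]; exact hκ
            exact (mul_eq_zero.mp h1).resolve_left hαne
          · have h0 := hglueβ iS s m hm
            rw [(hkill m hm).2] at h0
            have h1 : β iS * Hf iS (m + en s) = 0 := by rw [h0]; ring
            have hβne : β iS ≠ 0 := by rw [haiS.2]; exact hκ
            exact (mul_eq_zero.mp h1).resolve_left hβne
        apply hH0
        obtain ⟨s, mm, hmm, hEq⟩ := exists_dec hm0
        rw [hEq]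
        exact hzero s mm hmm


variable {n : ℕ}

lemma dep4' (a1 b1 c1 d1 a2 b2 c2 d2 a3 b3 c3 d3 a4 b4 c4 d4 g1 g2 g3 g4 : ℂ)
    (hg : ¬(g1 = 0 ∧ g2 = 0 ∧ g3 = 0 ∧ g4 = 0))
    (e1 : g1 * a1 + g2 * b1 + g3 * c1 + g4 * d1 = 0)
    (e2 : g1 * a2 + g2 * b2 + g3 * c2 + g4 * d2 = 0)
    (e3 : g1 * a3 + g2 * b3 + g3 * c3 + g4 * d3 = 0)
    (e4 : g1 * a4 + g2 * b4 + g3 * c4 + g4 * d4 = 0) :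
    ∃ x1 x2 x3 x4 : ℂ, ¬(x1 = 0 ∧ x2 = 0 ∧ x3 = 0 ∧ x4 = 0) ∧
      x1 * a1 + x2 * a2 + x3 * a3 + x4 * a4 = 0 ∧
      x1 * b1 + x2 * b2 + x3 * b3 + x4 * b4 = 0 ∧
      x1 * c1 + x2 * c2 + x3 * c3 + x4 * c4 = 0 ∧
      x1 * d1 + x2 * d2 + x3 * d3 + x4 * d4 = 0 := by
  have hgv : (![g1, g2, g3, g4] : Fin 4 → ℂ) ≠ 0 := by
    intro h0
    exact hg ⟨congrFun h0 0, congrFun h0 1, congrFun h0 2, congrFun h0 3⟩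
  obtain ⟨x, hxne, hxs⟩ := dep4 hgv
    ![![a1, b1, c1, d1], ![a2, b2, c2, d2], ![a3, b3, c3, d3], ![a4, b4, c4, d4]]
    (by
      intro u
      fin_cases u
      · simpa [Fin.sum_univ_four] using e1
      · simpa [Fin.sum_univ_four] using e2
      · simpa [Fin.sum_univ_four] using e3
      · simpa [Fin.sum_univ_four] using e4)
  refine ⟨x 0, x 1, x 2, x 3, ?_, ?_, ?_, ?_, ?_⟩
  · intro hcon
    exact hxne (fun u => by fin_cases u <;> simp [hcon.1, hcon.2.1, hcon.2.2.1, hcon.2.2.2])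
  · simpa [Fin.sum_univ_four] using hxs 0
  · simpa [Fin.sum_univ_four] using hxs 1
  · simpa [Fin.sum_univ_four] using hxs 2
  · simpa [Fin.sum_univ_four] using hxs 3

lemma T3two {lam l1 l2 l3 : (Fin n →₀ ℕ) → ℂ}
    (hS1 : Sol 1 lam l1) (hS2 : Sol 1 lam l2) (hS3 : Sol 1 lam l3) (p q : Fin n)
    {m1 m2 : Fin n →₀ ℕ} (h1 : dg m1 = 1) (h2 : dg m2 = 1)
    (hD : lam (m1 + en p) * lam (m2 + en q) - lam (m2 + en p) * lam (m1 + en q) ≠ 0)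
    (c c' : Fin n → ℂ)
    (hc : ∀ i m, dg m = 1 → lam (m + en i) = c i * lam (m + en p) + c' i * lam (m + en q)) :
    ∃ s t u : ℂ, ¬(s = 0 ∧ t = 0 ∧ u = 0) ∧
      ∀ a, dg a = 2 → s * l1 a + t * l2 a + u * l3 a = 0 := by
  obtain ⟨p', hp'⟩ := dg_one h1
  obtain ⟨q', hq'⟩ := dg_one h2
  subst hp' hq'
  have hDs : lam (en p' + en p) * lam (en q' + en q) - lam (en p' + en q) * lam (en q' + en p) ≠ 0 := by
    intro h0; exact hD (by linear_combination h0)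
  have hcp : c p = 1 ∧ c' p = 0 := by
    have h := solve22 hDs (x := c p - 1) (y := c' p)
      (by linear_combination -(hc p (en p') h1)) (by linear_combination -(hc p (en q') h2))
    exact ⟨by linear_combination h.1, h.2⟩
  have hcq : c q = 0 ∧ c' q = 1 := by
    have h := solve22 hDs (x := c q) (y := c' q - 1)
      (by linear_combination -(hc q (en p') h1)) (by linear_combination -(hc q (en q') h2))
    exact ⟨h.1, by linear_combination h.2⟩
  choose b1 b1' hb1 using fun j => T3span hS1 p q h1 h2 hD c c' hc j
  choose b2 b2' hb2 using fun j => T3span hS2 p q h1 h2 hD c c' hc j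
  choose b3 b3' hb3 using fun j => T3span hS3 p q h1 h2 hD c c' hc j
  have hst1 : b1 p + b1' q = 0 := starPQ hS1 p q h1 h2 hD b1 b1' hb1
  have hst2 : b2 p + b2' q = 0 := starPQ hS2 p q h1 h2 hD b2 b2' hb2
  have hst3 : b3 p + b3' q = 0 := starPQ hS3 p q h1 h2 hD b3 b3' hb3
  have hic1 : ∀ i j : Fin n, b1 i * lam (en j + en p) + b1' i * lam (en j + en q) =
      b1 j * lam (en i + en p) + b1' j * lam (en i + en q) := by
    intro i j
    have A := hb1 i (en j) (dg_en j)
    have B := hb1 j (en i) (dg_en i)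
    rw [show en j + en i = en i + en j from add_comm _ _] at A
    linear_combination B - A
  have hic2 : ∀ i j : Fin n, b2 i * lam (en j + en p) + b2' i * lam (en j + en q) =
      b2 j * lam (en i + en p) + b2' j * lam (en i + en q) := by
    intro i j
    have A := hb2 i (en j) (dg_en j)
    have B := hb2 j (en i) (dg_en i)
    rw [show en j + en i = en i + en j from add_comm _ _] at A
    linear_combination B - A
  have hic3 : ∀ i j : Fin n, b3 i * lam (en j + en p) + b3' i * lam (en j + en q) =
      b3 j * lam (en i + en p) + b3' j * lam (en i + en q) := by
    intro i j
    have A := hb3 i (en j) (dg_en j)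
    have B := hb3 j (en i) (dg_en i)
    rw [show en j + en i = en i + en j from add_comm _ _] at A
    linear_combination B - A
  have hicw : ∀ i j : Fin n, c i * lam (en j + en p) + c' i * lam (en j + en q) =
      c j * lam (en i + en p) + c' j * lam (en i + en q) := by
    intro i j
    have A := hc i (en j) (dg_en j)
    have B := hc j (en i) (dg_en i)
    rw [show en j + en i = en i + en j from add_comm _ _] at A
    linear_combination B - A
  have hgne : ¬(lam (en q' + en p) = 0 ∧ lam (en q' + en q) = 0 ∧
      -(lam (en p' + en p)) = 0 ∧ -(lam (en p' + en q)) = 0) := by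
    rintro ⟨e1, e2, -, -⟩
    apply hD
    rw [e1, e2]; ring
  obtain ⟨x1, x2, x3, x4, hnt, hA, hB, hC, hE⟩ := dep4'
    (b1 p') (b1' p') (b1 q') (b1' q')
    (b2 p') (b2' p') (b2 q') (b2' q')
    (b3 p') (b3' p') (b3 q') (b3' q')
    (c p') (c' p') (c q') (c' q')
    (lam (en q' + en p)) (lam (en q' + en q)) (-(lam (en p' + en p))) (-(lam (en p' + en q)))
    hgne
    (by linear_combination hic1 p' q') (by linear_combination hic2 p' q')
    (by linear_combination hic3 p' q') (by linear_combination hicw p' q')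
  have hBj : ∀ j, (x1 * b1 j + x2 * b2 j + x3 * b3 j + x4 * c j = 0) ∧
      (x1 * b1' j + x2 * b2' j + x3 * b3' j + x4 * c' j = 0) := by
    intro j
    have e1 : lam (en p' + en p) * (x1 * b1 j + x2 * b2 j + x3 * b3 j + x4 * c j) +
        lam (en p' + en q) * (x1 * b1' j + x2 * b2' j + x3 * b3' j + x4 * c' j) = 0 := by
      linear_combination x1 * hic1 j p' + x2 * hic2 j p' + x3 * hic3 j p' + x4 * hicw j p'
        + lam (en j + en p) * hA + lam (en j + en q) * hB
    have e2 : lam (en q' + en p) * (x1 * b1 j + x2 * b2 j + x3 * b3 j + x4 * c j) +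
        lam (en q' + en q) * (x1 * b1' j + x2 * b2' j + x3 * b3' j + x4 * c' j) = 0 := by
      linear_combination x1 * hic1 j q' + x2 * hic2 j q' + x3 * hic3 j q' + x4 * hicw j q'
        + lam (en j + en p) * hC + lam (en j + en q) * hE
    exact solve22 hDs e1 e2
  have h2x4 : x4 * 2 = 0 := by
    have e1 := (hBj p).1
    have e2 := (hBj q).2
    rw [hcp.1] at e1
    rw [hcq.2] at e2
    linear_combination e1 + e2 - x1 * hst1 - x2 * hst2 - x3 * hst3
  have hx4 : x4 = 0 := by linear_combination h2x4 / 2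
  refine ⟨x1, x2, x3, fun hc123 => hnt ⟨hc123.1, hc123.2.1, hc123.2.2, hx4⟩, fun a ha => ?_⟩
  obtain ⟨i, m, hm, rfl⟩ := exists_dec ha
  have e1 := (hBj i).1
  have e2 := (hBj i).2
  rw [hx4] at e1 e2
  rw [hb1 i m hm, hb2 i m hm, hb3 i m hm]
  linear_combination lam (m + en p) * e1 + lam (m + en q) * e2

lemma core3 {k : ℕ} (hk : 2 ≤ k) {lam l1 l2 : (Fin n →₀ ℕ) → ℂ}
    (hS1 : Sol k lam l1) (hS2 : Sol k lam l2)
    (hne : ¬∃ γ : ℂ, ∃ z : Fin n → ℂ, ∀ a, dg a = k + 1 → lam a = γ * a.prod fun j e => z j ^ e) :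
    ∃ s t : ℂ, ¬(s = 0 ∧ t = 0) ∧ ∀ a, dg a = k + 1 → s * l1 a + t * l2 a = 0 := by
  obtain ⟨k', rfl⟩ : ∃ k', k = k' + 2 := ⟨k - 2, by omega⟩
  by_cases hdep : ∃ (p q : Fin n) (m1 m2 : Fin n →₀ ℕ), dg m1 = k' + 2 ∧ dg m2 = k' + 2 ∧
      lam (m1 + en p) * lam (m2 + en q) - lam (m2 + en p) * lam (m1 + en q) ≠ 0
  · obtain ⟨p, q, m1, m2, h1, h2, hD⟩ := hdep
    by_cases hr : ∃ (r : Fin n) (m3 : Fin n →₀ ℕ), dg m3 = k' + 2 ∧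
        (lam (m2 + en p) * lam (m3 + en q) - lam (m3 + en p) * lam (m2 + en q)) * lam (m1 + en r) + (lam (m3 + en p) * lam (m1 + en q) - lam (m1 + en p) * lam (m3 + en q)) * lam (m2 + en r) + (lam (m1 + en p) * lam (m2 + en q) - lam (m2 + en p) * lam (m1 + en q)) * lam (m3 + en r) ≠ 0
    · obtain ⟨r, m3, h3, hM⟩ := hr
      have hz := T2 hS1 p q r h1 h2 h3 hM
      exact ⟨1, 0, fun hcc => one_ne_zero hcc.1, fun a ha => by rw [hz a ha]; ring⟩
    · push_neg at hr
      have hcex : ∀ i : Fin n, ∃ x y : ℂ, ∀ m, dg m = k' + 2 →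
          lam (m + en i) = x * lam (m + en p) + y * lam (m + en q) := by
        intro i
        refine ⟨(lam (m1 + en i) * lam (m2 + en q) - lam (m2 + en i) * lam (m1 + en q)) / (lam (m1 + en p) * lam (m2 + en q) - lam (m2 + en p) * lam (m1 + en q)),
                (lam (m1 + en p) * lam (m2 + en i) - lam (m2 + en p) * lam (m1 + en i)) / (lam (m1 + en p) * lam (m2 + en q) - lam (m2 + en p) * lam (m1 + en q)), fun m hm => ?_⟩
        have h0 := hr i m hm
        rw [div_mul_eq_mul_div, div_mul_eq_mul_div, ← add_div, eq_div_iff hD]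
        linear_combination h0
      choose c c' hc' using hcex
      exact T3main hS1 hS2 p q h1 h2 hD c c' hc'
  · push_neg at hdep
    exfalso
    apply hne
    by_cases hz : ∃ (i1 : Fin n) (m0 : Fin n →₀ ℕ), dg m0 = k' + 2 ∧ lam (m0 + en i1) ≠ 0
    · obtain ⟨i1, m0, hm0, hne0⟩ := hz
      have hkey : ∀ (i : Fin n) (m : Fin n →₀ ℕ), dg m = k' + 2 →
          lam (m + en i) = (lam (m0 + en i) / lam (m0 + en i1)) * lam (m + en i1) := by
        intro i m hm
        have h0 := hdep i i1 m m0 hm hm0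
        field_simp
        linear_combination h0
      obtain ⟨γ, hγ⟩ := eval_of_rank_one (k' + 2) lam (fun m => lam (m + en i1))
        (fun i => lam (m0 + en i) / lam (m0 + en i1)) hkey
      exact ⟨γ, _, hγ⟩
    · push_neg at hz
      refine ⟨0, fun _ => 0, fun a ha => ?_⟩
      obtain ⟨i, m, hm, rfl⟩ := exists_dec ha
      rw [hz i m hm]; ring

lemma core2 {lam l1 l2 l3 : (Fin n →₀ ℕ) → ℂ}
    (hS1 : Sol 1 lam l1) (hS2 : Sol 1 lam l2) (hS3 : Sol 1 lam l3)
    (hne : ¬∃ γ : ℂ, ∃ z : Fin n → ℂ, ∀ a, dg a = 2 → lam a = γ * a.prod fun j e => z j ^ e) :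
    ∃ s t u : ℂ, ¬(s = 0 ∧ t = 0 ∧ u = 0) ∧
      ∀ a, dg a = 2 → s * l1 a + t * l2 a + u * l3 a = 0 := by
  by_cases hdep : ∃ (p q : Fin n) (m1 m2 : Fin n →₀ ℕ), dg m1 = 1 ∧ dg m2 = 1 ∧
      lam (m1 + en p) * lam (m2 + en q) - lam (m2 + en p) * lam (m1 + en q) ≠ 0
  · obtain ⟨p, q, m1, m2, h1, h2, hD⟩ := hdep
    by_cases hr : ∃ (r : Fin n) (m3 : Fin n →₀ ℕ), dg m3 = 1 ∧
        (lam (m2 + en p) * lam (m3 + en q) - lam (m3 + en p) * lam (m2 + en q)) * lam (m1 + en r) + (lam (m3 + en p) * lam (m1 + en q) - lam (m1 + en p) * lam (m3 + en q)) * lam (m2 + en r) + (lam (m1 + en p) * lam (m2 + en q) - lam (m2 + en p) * lam (m1 + en q)) * lam (m3 + en r) ≠ 0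
    · obtain ⟨r, m3, h3, hM⟩ := hr
      have hz := T2 hS1 p q r h1 h2 h3 hM
      exact ⟨1, 0, 0, fun hcc => one_ne_zero hcc.1, fun a ha => by rw [hz a ha]; ring⟩
    · push_neg at hr
      have hcex : ∀ i : Fin n, ∃ x y : ℂ, ∀ m, dg m = 1 →
          lam (m + en i) = x * lam (m + en p) + y * lam (m + en q) := by
        intro i
        refine ⟨(lam (m1 + en i) * lam (m2 + en q) - lam (m2 + en i) * lam (m1 + en q)) / (lam (m1 + en p) * lam (m2 + en q) - lam (m2 + en p) * lam (m1 + en q)),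
                (lam (m1 + en p) * lam (m2 + en i) - lam (m2 + en p) * lam (m1 + en i)) / (lam (m1 + en p) * lam (m2 + en q) - lam (m2 + en p) * lam (m1 + en q)), fun m hm => ?_⟩
        have h0 := hr i m hm
        rw [div_mul_eq_mul_div, div_mul_eq_mul_div, ← add_div, eq_div_iff hD]
        linear_combination h0
      choose c c' hc' using hcex
      exact T3two hS1 hS2 hS3 p q h1 h2 hD c c' hc'
  · push_neg at hdep
    exfalso
    apply hne
    by_cases hz : ∃ (i1 : Fin n) (m0 : Fin n →₀ ℕ), dg m0 = 1 ∧ lam (m0 + en i1) ≠ 0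
    · obtain ⟨i1, m0, hm0, hne0⟩ := hz
      have hkey : ∀ (i : Fin n) (m : Fin n →₀ ℕ), dg m = 1 →
          lam (m + en i) = (lam (m0 + en i) / lam (m0 + en i1)) * lam (m + en i1) := by
        intro i m hm
        have h0 := hdep i i1 m m0 hm hm0
        field_simp
        linear_combination h0
      obtain ⟨γ, hγ⟩ := eval_of_rank_one 1 lam (fun m => lam (m + en i1))
        (fun i => lam (m0 + en i) / lam (m0 + en i1)) hkey
      exact ⟨γ, _, hγ⟩
    · push_neg at hz
      refine ⟨0, fun _ => 0, fun a ha => ?_⟩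
      obtain ⟨i, m, hm, rfl⟩ := exists_dec ha
      rw [hz i m hm]; ring


variable {n : ℕ}

open MvPolynomial Module

lemma mem_formSpace {d : ℕ} {p : PolyR n} : p ∈ formSpace n d ↔ p.IsHomogeneous d := Iff.rfl

lemma mono_mem {d : ℕ} {w : Fin n →₀ ℕ} (h : dg w = d) :
    (monomial w (1 : ℂ) : PolyR n) ∈ formSpace n d :=
  mem_formSpace.mpr (isHomogeneous_monomial 1 h)

lemma supp_deg {d : ℕ} {z : PolyR n} (hz : z ∈ formSpace n d) {w : Fin n →₀ ℕ}
    (hw : w ∈ z.support) : dg w = d := by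
  have h := mem_formSpace.mp hz
  have := h (MvPolynomial.mem_support_iff.mp hw)
  rwa [dg, Finsupp.degree_eq_weight_one]

lemma setfin {d : ℕ} : {a : Fin n →₀ ℕ | Finsupp.degree a = d}.Finite :=
  (Finsupp.finite_of_degree_le d).subset (fun a ha => le_of_eq ha)

lemma formSpace_le_span (d : ℕ) :
    formSpace n d ≤ Submodule.span ℂ
      ((fun a : Fin n →₀ ℕ => (monomial a (1 : ℂ) : PolyR n)) '' {a | Finsupp.degree a = d}) := by
  intro p hp
  rw [p.as_sum]
  apply Submodule.sum_mem
  intro w hw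
  have hmem : (monomial w (1 : ℂ) : PolyR n) ∈
      (fun a : Fin n →₀ ℕ => (monomial a (1 : ℂ) : PolyR n)) '' {a | Finsupp.degree a = d} :=
    Set.mem_image_of_mem _ (supp_deg hp hw)
  have : (monomial w (coeff w p) : PolyR n) = coeff w p • monomial w (1 : ℂ) := by
    rw [smul_monomial, smul_eq_mul, mul_one]
  rw [this]
  exact Submodule.smul_mem _ _ (Submodule.subset_span hmem)

instance fdFormSpace (d : ℕ) : FiniteDimensional ℂ ↥(formSpace n d) := by
  haveI := FiniteDimensional.span_of_finite ℂ (Set.Finite.image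
    (fun a : Fin n →₀ ℕ => (monomial a (1 : ℂ) : PolyR n)) (setfin (d := d)))
  exact Submodule.finiteDimensional_of_le (formSpace_le_span d)

lemma repr_dual {d : ℕ} (ψ : ↥(formSpace n d) →ₗ[ℂ] ℂ) (z : ↥(formSpace n d)) :
    ψ z = ∑ w ∈ (z : PolyR n).support, coeff w (z : PolyR n) *
      (if h : dg w = d then ψ ⟨monomial w 1, mono_mem h⟩ else 0) := by
  have key : z = ∑ w ∈ (z : PolyR n).support, coeff w (z : PolyR n) •
      (if h : dg w = d then (⟨monomial w 1, mono_mem h⟩ : ↥(formSpace n d)) else 0) := by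
    apply Subtype.ext
    rw [Submodule.coe_sum]
    conv_lhs => rw [(z : PolyR n).as_sum]
    apply Finset.sum_congr rfl
    intro w hw
    rw [dif_pos (supp_deg z.2 hw)]
    rw [SetLike.val_smul, smul_monomial, smul_eq_mul, mul_one]
  conv_lhs => rw [key, map_sum]
  apply Finset.sum_congr rfl
  intro w hw
  rw [dif_pos (supp_deg z.2 hw), dif_pos (supp_deg z.2 hw), map_smul, smul_eq_mul]

lemma mul_memV2 {d : ℕ} (x y : ↥(formSpace n d)) :
    ((x : PolyR n) * (y : PolyR n)) ∈ formSpace n (2 * d) := by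
  have := (mem_formSpace.mp x.2).mul (mem_formSpace.mp y.2)
  rwa [mem_formSpace, two_mul]

/-- multiplication into degree 2d -/
def mulV {d : ℕ} (x y : ↥(formSpace n d)) : ↥(formSpace n (2 * d)) :=
  ⟨(x : PolyR n) * (y : PolyR n), mul_memV2 x y⟩

@[simp] lemma coe_mulV {d : ℕ} (x y : ↥(formSpace n d)) :
    (mulV x y : PolyR n) = (x : PolyR n) * (y : PolyR n) := rfl

lemma mulV_comm {d : ℕ} (x y : ↥(formSpace n d)) : mulV x y = mulV y x :=
  Subtype.ext (mul_comm _ _)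


variable {n : ℕ}

open MvPolynomial Module

set_option maxHeartbeats 1000000 in
set_option synthInstance.maxHeartbeats 1000000 in
lemma bridge {k : ℕ} (U : Submodule ℂ (PolyR n)) (hU : U ≤ formSpace n (k + 1))
    (hbpf : IsBPF n U) (hcodim : vcodim n (k + 1) U = 1) (c : ℕ)
    (HC : ∀ (lam : (Fin n →₀ ℕ) → ℂ) (ls : Fin (c + 1) → (Fin n →₀ ℕ) → ℂ),
        (¬∃ γ : ℂ, ∃ z : Fin n → ℂ, ∀ a, dg a = k + 1 → lam a = γ * a.prod fun j e => z j ^ e) →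
        (∀ u, Sol k lam (ls u)) →
        ∃ x : Fin (c + 1) → ℂ, (¬∀ u, x u = 0) ∧ ∀ a, dg a = k + 1 → ∑ u, x u * ls u a = 0) :
    vcodim n (2 * (k + 1)) (U * U) ≤ c := by
  classical
  -- the hyperplane functional φ
  have hUV : Submodule.comap (formSpace n (k + 1)).subtype U ≠ ⊤ := by
    intro htop
    have hle : formSpace n (k + 1) ≤ U := by
      intro p hp
      have hmem : (⟨p, hp⟩ : ↥(formSpace n (k + 1))) ∈
          Submodule.comap (formSpace n (k + 1)).subtype U := by
        rw [htop]; trivial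
      exact hmem
    have hEq : U = formSpace n (k + 1) := le_antisymm hU hle
    rw [hEq] at hcodim
    simp [vcodim] at hcodim
  obtain ⟨φ, hφne, hφmap⟩ := Submodule.exists_dual_map_eq_bot_of_lt_top
    (lt_top_iff_ne_top.mpr hUV) inferInstance
  have hvan : ∀ x : ↥(formSpace n (k + 1)), (x : PolyR n) ∈ U → φ x = 0 := by
    intro x hx
    have hmem : φ x ∈ Submodule.map φ (Submodule.comap (formSpace n (k + 1)).subtype U) :=
      Submodule.mem_map_of_mem hx
    rw [hφmap] at hmem
    exact (Submodule.mem_bot ℂ).mp hmem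
  have hfinV : finrank ℂ ↥(formSpace n (k + 1)) = finrank ℂ ↥U + 1 := by
    rw [vcodim] at hcodim
    omega
  have hker : ∀ x : ↥(formSpace n (k + 1)), φ x = 0 → (x : PolyR n) ∈ U := by
    have hle : Submodule.comap (formSpace n (k + 1)).subtype U ≤ LinearMap.ker φ :=
      fun x hx => hvan x hx
    have e1 : finrank ℂ ↥(Submodule.comap (formSpace n (k + 1)).subtype U) = finrank ℂ ↥U :=
      (Submodule.comapSubtypeEquivOfLe hU).finrank_eq
    have e2 := LinearMap.finrank_range_add_finrank_ker φ
    have e3 : finrank ℂ ↥(LinearMap.range φ) = 1 := by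
      have hle1 : finrank ℂ ↥(LinearMap.range φ) ≤ 1 := by
        have h := Submodule.finrank_le (LinearMap.range φ)
        simpa using h
      have hpos : 0 < finrank ℂ ↥(LinearMap.range φ) := by
        rw [Module.finrank_pos_iff]
        obtain ⟨x, hx⟩ := DFunLike.ne_iff.mp hφne
        refine nontrivial_of_ne ⟨φ x, LinearMap.mem_range_self _ x⟩ 0 ?_
        simp only [ne_eq, Submodule.mk_eq_zero]
        simpa using hx
      omega
    have heq : Submodule.comap (formSpace n (k + 1)).subtype U = LinearMap.ker φ :=
      Submodule.eq_of_le_of_finrank_eq hle (by rw [e1]; omega)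
    intro x hx
    have : x ∈ Submodule.comap (formSpace n (k + 1)).subtype U := by
      rw [heq]; exact hx
    exact this
  -- the element v with φ v = 1
  obtain ⟨v0, hv0'⟩ := DFunLike.ne_iff.mp hφne
  have hv0 : φ v0 ≠ 0 := by simpa using hv0'
  set v : ↥(formSpace n (k + 1)) := (φ v0)⁻¹ • v0 with hvdef
  have hv : φ v = 1 := by
    rw [hvdef, map_smul, smul_eq_mul, inv_mul_cancel₀ hv0]
  -- the coefficient function λ
  set lam : (Fin n →₀ ℕ) → ℂ :=
    fun a => if h : dg a = k + 1 then φ ⟨monomial a 1, mono_mem h⟩ else 0 with hlam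
  -- W and the master relation
  set W := Submodule.comap (formSpace n (2 * (k + 1))).subtype (U * U) with hWdef
  have hmaster : ∀ (mu : Module.Dual ℂ (↥(formSpace n (2 * (k + 1))) ⧸ W))
      (x y : ↥(formSpace n (k + 1))),
      mu (W.mkQ (mulV x y)) =
        φ x * (mu (W.mkQ (mulV v y)) - mu (W.mkQ (mulV v v)) / 2 * φ y) +
        (mu (W.mkQ (mulV v x)) - mu (W.mkQ (mulV v v)) / 2 * φ x) * φ y := by
    intro mu x y
    have hx0 : ((x - φ x • v : ↥(formSpace n (k + 1))) : PolyR n) ∈ U := by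
      apply hker
      rw [map_sub, map_smul, hv, smul_eq_mul, mul_one, sub_self]
    have hy0 : ((y - φ y • v : ↥(formSpace n (k + 1))) : PolyR n) ∈ U := by
      apply hker
      rw [map_sub, map_smul, hv, smul_eq_mul, mul_one, sub_self]
    have hUUmem : W.mkQ (mulV (x - φ x • v) (y - φ y • v)) = 0 := by
      rw [Submodule.mkQ_apply, Submodule.Quotient.mk_eq_zero]
      exact Submodule.mem_comap.mpr (Submodule.mul_mem_mul hx0 hy0)
    have hexp : mulV x y = mulV (x - φ x • v) (y - φ y • v) + φ y • mulV x v + φ x • mulV v y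
        - (φ x * φ y) • mulV v v := by
      apply Subtype.ext
      simp only [coe_mulV, Submodule.coe_add, Submodule.coe_sub, SetLike.val_smul, smul_eq_C_mul,
        map_mul]
      ring
    have e := congrArg (fun z => mu (W.mkQ z)) hexp
    simp only [map_add, map_sub, map_smul, smul_eq_mul] at e
    have h00 : mu (W.mkQ (mulV (x - φ x • v) (y - φ y • v))) = 0 := by
      rw [hUUmem, map_zero]
    rw [h00, mulV_comm x v] at e
    linear_combination e
  -- ℓ functions
  set L : Module.Dual ℂ (↥(formSpace n (2 * (k + 1))) ⧸ W) → (Fin n →₀ ℕ) → ℂ :=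
    fun mu bb => if h : dg bb = k + 1 then
      mu (W.mkQ (mulV v ⟨monomial bb 1, mono_mem h⟩)) -
        mu (W.mkQ (mulV v v)) / 2 * φ ⟨monomial bb 1, mono_mem h⟩
    else 0 with hL
  have hab : ∀ (mu : Module.Dual ℂ (↥(formSpace n (2 * (k + 1))) ⧸ W)) (a b : Fin n →₀ ℕ)
      (ha : dg a = k + 1) (hb : dg b = k + 1)
      (hm : (monomial (a + b) (1 : ℂ) : PolyR n) ∈ formSpace n (2 * (k + 1))),
      mu (W.mkQ ⟨monomial (a + b) 1, hm⟩) = lam a * L mu b + L mu a * lam b := by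
    intro mu a b ha hb hm
    have hmas := hmaster mu ⟨monomial a 1, mono_mem ha⟩ ⟨monomial b 1, mono_mem hb⟩
    have hmul : mulV (⟨monomial a 1, mono_mem ha⟩ : ↥(formSpace n (k + 1)))
        ⟨monomial b 1, mono_mem hb⟩ = ⟨monomial (a + b) 1, hm⟩ := by
      apply Subtype.ext
      rw [coe_mulV]
      show (monomial a 1 : PolyR n) * monomial b 1 = monomial (a + b) 1
      rw [monomial_mul, one_mul]
    rw [hmul] at hmas
    rw [hmas]
    simp only [hlam, hL]
    rw [dif_pos ha, dif_pos hb, dif_pos ha, dif_pos hb]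
  have hsol : ∀ mu, Sol k lam (L mu) := by
    intro mu i j m m' hm hm'
    have hmi : dg (m + en i) = k + 1 := by rw [dg_add, hm, dg_en]
    have hmj : dg (m + en j) = k + 1 := by rw [dg_add, hm, dg_en]
    have hmi' : dg (m' + en i) = k + 1 := by rw [dg_add, hm', dg_en]
    have hmj' : dg (m' + en j) = k + 1 := by rw [dg_add, hm', dg_en]
    have hmem1 : (monomial ((m + en i) + (m' + en j)) (1 : ℂ) : PolyR n) ∈
        formSpace n (2 * (k + 1)) := mono_mem (by rw [dg_add, hmi, hmj']; ring)
    have hmem2 : (monomial ((m + en j) + (m' + en i)) (1 : ℂ) : PolyR n) ∈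
        formSpace n (2 * (k + 1)) := mono_mem (by rw [dg_add, hmj, hmi']; ring)
    have h1 := hab mu (m + en i) (m' + en j) hmi hmj' hmem1
    have h2 := hab mu (m + en j) (m' + en i) hmj hmi' hmem2
    have harg : (m + en i) + (m' + en j) = (m + en j) + (m' + en i) := by
      rw [add_add_add_comm, add_add_add_comm m (en j), add_comm (en i) (en j)]
    have hmono : (monomial ((m + en i) + (m' + en j)) (1 : ℂ) : PolyR n) =
        monomial ((m + en j) + (m' + en i)) 1 := by rw [harg]
    have h3 : mu (W.mkQ ⟨monomial ((m + en i) + (m' + en j)) 1, hmem1⟩) =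
        mu (W.mkQ ⟨monomial ((m + en j) + (m' + en i)) 1, hmem2⟩) :=
      congrArg mu (congrArg W.mkQ (Subtype.ext hmono))
    linear_combination h3 + h2 - h1
  -- nonzero-ness of λ
  have hlamne : ∃ a, dg a = k + 1 ∧ lam a ≠ 0 := by
    by_contra hcon
    push_neg at hcon
    apply hφne
    apply LinearMap.ext
    intro z
    rw [LinearMap.zero_apply, repr_dual φ z]
    apply Finset.sum_eq_zero
    intro w hw
    have hdw := supp_deg z.2 hw
    rw [dif_pos hdw]
    have h0 := hcon w hdw
    simp only [hlam] at h0
    rw [dif_pos hdw] at h0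
    rw [h0, mul_zero]
  -- not of evaluation form
  have hnoneval : ¬∃ γ : ℂ, ∃ z : Fin n → ℂ, ∀ a, dg a = k + 1 →
      lam a = γ * a.prod fun j e => z j ^ e := by
    rintro ⟨γ, z, hγ⟩
    obtain ⟨a0, ha0, hlne⟩ := hlamne
    have hγne : γ ≠ 0 := by
      intro h0
      exact hlne (by rw [hγ a0 ha0, h0, zero_mul])
    have hev : ∀ p ∈ U, eval z p = 0 := by
      intro p hp
      have hpV := hU hp
      have h0 : φ ⟨p, hpV⟩ = 0 := hvan _ hp
      rw [repr_dual φ ⟨p, hpV⟩] at h0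
      have he : eval z p = ∑ w ∈ p.support, coeff w p * w.prod (fun i e => z i ^ e) := by
        rw [eval_eq]
        rfl
      rw [he]
      have hterm : ∀ w ∈ p.support, coeff w p * w.prod (fun i e => z i ^ e)
          = γ⁻¹ * (coeff w p * lam w) := by
        intro w hw
        have hdw := supp_deg hpV hw
        rw [hγ w hdw]
        field_simp
      rw [Finset.sum_congr rfl hterm, ← Finset.mul_sum]
      have hzero : (∑ w ∈ p.support, coeff w p * lam w) = 0 := by
        simp only [hlam]
        exact h0
      rw [hzero, mul_zero]
    have hz0 : z = 0 := hbpf z hev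
    apply hlne
    rw [hγ a0 ha0, hz0]
    have ha0ne : a0 ≠ 0 := by
      intro h0
      rw [h0, dg_zero] at ha0
      omega
    obtain ⟨i, hi⟩ : ∃ i, a0 i ≠ 0 := by
      by_contra hc
      push_neg at hc
      exact ha0ne (Finsupp.ext hc)
    have hpr : (a0.prod fun j e => (0 : Fin n → ℂ) j ^ e) = 0 := by
      apply Finset.prod_eq_zero (Finsupp.mem_support_iff.mpr hi)
      simp only [Pi.zero_apply]
      exact zero_pow hi
    rw [hpr, mul_zero]
  -- finrank bookkeeping
  have e1 := Submodule.finrank_quotient_add_finrank W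
  have e2 : finrank ℂ ↥W = finrank ℂ ↥(U * U) := by
    have hUU : U * U ≤ formSpace n (2 * (k + 1)) := by
      rw [Submodule.mul_le]
      intro p hp q hq
      have := (mem_formSpace.mp (hU hp)).mul (mem_formSpace.mp (hU hq))
      rwa [mem_formSpace, two_mul]
    exact (Submodule.comapSubtypeEquivOfLe hUU).finrank_eq
  suffices hq : finrank ℂ (↥(formSpace n (2 * (k + 1))) ⧸ W) ≤ c by
    rw [vcodim]
    omega
  by_contra hgt
  push_neg at hgt
  have hdual : c + 1 ≤ finrank ℂ (Module.Dual ℂ (↥(formSpace n (2 * (k + 1))) ⧸ W)) := by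
    rw [Subspace.dual_finrank_eq]
    omega
  obtain ⟨f, hf⟩ := exists_linearIndependent_of_le_finrank hdual
  obtain ⟨x, hxne, hxv⟩ := HC lam (fun u => L (f u)) hnoneval (fun u => hsol (f u))
  apply hxne
  have hcomb : ∑ u, x u • f u = 0 := by
    apply LinearMap.ext
    intro ζ
    obtain ⟨zz, rfl⟩ := W.mkQ_surjective ζ
    rw [LinearMap.zero_apply, LinearMap.sum_apply]
    simp only [LinearMap.smul_apply, smul_eq_mul]
    have hrep : ∀ u, f u (W.mkQ zz) = ∑ w ∈ (zz : PolyR n).support, coeff w (zz : PolyR n) *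
        (if h : dg w = 2 * (k + 1) then f u (W.mkQ ⟨monomial w 1, mono_mem h⟩) else 0) :=
      fun u => repr_dual ((f u).comp W.mkQ) zz
    rw [Finset.sum_congr rfl (fun u _ => by rw [hrep u])]
    rw [Finset.sum_congr rfl (fun u _ => Finset.mul_sum _ _ _)]
    rw [Finset.sum_comm]
    apply Finset.sum_eq_zero
    intro w hw
    have hdw : dg w = 2 * (k + 1) := supp_deg zz.2 hw
    obtain ⟨a, b, ha, hb, rfl⟩ : ∃ a b, dg a = k + 1 ∧ dg b = k + 1 ∧ w = a + b := by
      obtain ⟨a, b, ha, hb, hab'⟩ := exists_split (s := k + 1) (t := k + 1)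
        (by rw [hdw]; ring : dg w = (k + 1) + (k + 1))
      exact ⟨a, b, ha, hb, hab'⟩
    have hsum0 : ∑ u, x u * f u (W.mkQ ⟨monomial (a + b) 1, mono_mem hdw⟩) = 0 := by
      rw [Finset.sum_congr rfl (fun u _ => by rw [hab (f u) a b ha hb (mono_mem hdw)])]
      have hre : ∑ u, x u * (lam a * L (f u) b + L (f u) a * lam b)
          = lam a * (∑ u, x u * L (f u) b) + (∑ u, x u * L (f u) a) * lam b := by
        calc ∑ u, x u * (lam a * L (f u) b + L (f u) a * lam b)
            = ∑ u, (lam a * (x u * L (f u) b) + (x u * L (f u) a) * lam b) :=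
              Finset.sum_congr rfl (fun u _ => by ring)
          _ = lam a * (∑ u, x u * L (f u) b) + (∑ u, x u * L (f u) a) * lam b := by
              rw [Finset.sum_add_distrib, Finset.mul_sum, Finset.sum_mul]
      rw [hre, hxv a ha, hxv b hb]
      ring
    calc ∑ u, x u * (coeff (a + b) (zz : PolyR n) *
          (if h : dg (a + b) = 2 * (k + 1) then f u (W.mkQ ⟨monomial (a + b) 1, mono_mem h⟩) else 0))
        = coeff (a + b) (zz : PolyR n) *
          ∑ u, x u * f u (W.mkQ ⟨monomial (a + b) 1, mono_mem hdw⟩) := by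
          rw [Finset.mul_sum]
          apply Finset.sum_congr rfl
          intro u _
          rw [dif_pos hdw]
          ring
      _ = 0 := by rw [hsum0, mul_zero]
  intro u
  exact Fintype.linearIndependent_iff.mp hf x hcomb u


end Stmt7Aux

end


theorem stmt7 (n d : ℕ) (hn : 2 ≤ n) (hd : 2 ≤ d)
    (U : Submodule ℂ (PolyR n)) (hU : U ≤ formSpace n d)
    (hbpf : IsBPF n U) (hcodim : vcodim n d U = 1) :
    (3 ≤ d → vcodim n (2 * d) (U * U) = 0 ∨ vcodim n (2 * d) (U * U) = 1) ∧
    (d = 2 → vcodim n (2 * d) (U * U) ≤ 2) := by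
  constructor
  · intro hd3
    obtain ⟨k, rfl⟩ : ∃ k, d = k + 1 := ⟨d - 1, by omega⟩
    have hk2 : 2 ≤ k := by omega
    have hb := Stmt7Aux.bridge U hU hbpf hcodim 1 ?_
    · omega
    · intro lam ls hne hsols
      obtain ⟨s, t, hst, hvan⟩ := Stmt7Aux.core3 hk2 (hsols 0) (hsols 1) hne
      refine ⟨![s, t], ?_, ?_⟩
      · intro hall
        exact hst ⟨by simpa using hall 0, by simpa using hall 1⟩
      · intro a ha
        simpa [Fin.sum_univ_two] using hvan a ha
  · intro hd2
    subst hd2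
    have hb := Stmt7Aux.bridge (k := 1) U hU hbpf hcodim 2 ?_
    · exact hb
    · intro lam ls hne hsols
      obtain ⟨s, t, u, hstu, hvan⟩ := Stmt7Aux.core2 (hsols 0) (hsols 1) (hsols 2) hne
      refine ⟨![s, t, u], ?_, ?_⟩
      · intro hall
        exact hstu ⟨by simpa using hall 0, by simpa using hall 1, by simpa using hall 2⟩
      · intro a ha
        simpa [Fin.sum_univ_three] using hvan a ha
end

section
/- Let U ⊆ A(n)_d be a linear subspace of codimension k, and suppose there exists m with 2 ≤ m ≤ n such that U' := U ∩ A(m)_d has codimension k in A(m)_d. Then codim_{A(n)_{2d}} U² ≤ (n − m)·codim_{A(m)_{2d−1}}(U'·A(m)_{d−1}) + codim_{A(m)_{2d}} (U')². -/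
open MvPolynomial Module

/-- The inclusion `A(m) ⊆ A(n)` for `m ≤ n`. -/
noncomputable def embed (m n : ℕ) (h : m ≤ n) : PolyR m →ₐ[ℂ] PolyR n :=
  MvPolynomial.rename (Fin.castLE h)



namespace Aux8

instance fs_fd (n d : ℕ) : FiniteDimensional ℂ (formSpace n d) := by
  have h : formSpace n d ≤ restrictTotalDegree (Fin n) ℂ d := by
    intro p hp
    rw [mem_restrictTotalDegree]
    exact MvPolynomial.IsHomogeneous.totalDegree_le hp
  exact Submodule.finiteDimensional_of_le h

lemma embed_inj (m n : ℕ) (h : m ≤ n) : Function.Injective (embed m n h) :=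
  rename_injective _ (Fin.castLE_injective h)

lemma map_embed_le (m n d : ℕ) (h : m ≤ n) :
    (formSpace m d).map (embed m n h).toLinearMap ≤ formSpace n d := by
  rintro p ⟨q, hq, rfl⟩
  exact MvPolynomial.IsHomogeneous.rename_isHomogeneous hq

lemma mul_le_fs {n a b c : ℕ} (hc : a + b = c) {P Q : Submodule ℂ (PolyR n)}
    (hP : P ≤ formSpace n a) (hQ : Q ≤ formSpace n b) : P * Q ≤ formSpace n c := by
  subst hc
  exact le_trans (mul_le_mul' hP hQ) (homogeneousSubmodule_mul a b)

/-- complement existence -/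
lemma exists_compl {V : Type*} [AddCommGroup V] [Module ℂ V]
    (P Q : Submodule ℂ V) [FiniteDimensional ℂ Q] (hPQ : P ≤ Q) :
    ∃ T : Submodule ℂ V, T ≤ Q ∧ P ⊔ T = Q ∧
      finrank ℂ T = finrank ℂ Q - finrank ℂ P := by
  obtain ⟨T', hT'⟩ := Submodule.exists_isCompl (P.comap Q.subtype)
  refine ⟨T'.map Q.subtype, Submodule.map_subtype_le _ _, ?_, ?_⟩
  · have h1 : (P.comap Q.subtype).map Q.subtype = P := by
      rw [Submodule.map_comap_subtype, inf_eq_right.mpr hPQ]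
    rw [← h1, ← Submodule.map_sup, hT'.codisjoint.eq_top, Submodule.map_top,
      Submodule.range_subtype]
  · have h2 := Submodule.finrank_add_eq_of_isCompl hT'
    have h3 : finrank ℂ (P.comap Q.subtype) = finrank ℂ P := by
      rw [← Submodule.finrank_map_subtype_eq Q, Submodule.map_comap_subtype,
        inf_eq_right.mpr hPQ]
    rw [Submodule.finrank_map_subtype_eq]
    omega

end Aux8

namespace Aux8

lemma finrank_map_embed (m n : ℕ) (h : m ≤ n) (W : Submodule ℂ (PolyR m)) :
    finrank ℂ (W.map (embed m n h).toLinearMap) = finrank ℂ W :=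
  (Submodule.equivMapOfInjective _ (embed_inj m n h) W).finrank_eq.symm

section
variable {n m d k : ℕ} (hmn : m ≤ n)
  (U : Submodule ℂ (PolyR n)) (hU : U ≤ formSpace n d)
  (hcodim : vcodim n d U = k)
  (U' : Submodule ℂ (PolyR m))
  (hU' : U' = Submodule.comap (embed m n hmn).toLinearMap U ⊓ formSpace m d)
  (hcodim' : vcodim m d U' = k)

include hU hU' hcodim hcodim'

lemma sup_key : U ⊔ (formSpace m d).map (embed m n hmn).toLinearMap = formSpace n d := by
  set ι := (embed m n hmn).toLinearMap
  have hU'le : U' ≤ formSpace m d := hU' ▸ inf_le_right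
  have hmapU' : U'.map ι ≤ U := by
    rw [Submodule.map_le_iff_le_comap, hU']; exact inf_le_left
  have hinf : U ⊓ (formSpace m d).map ι = U'.map ι := by
    apply le_antisymm
    · rintro p ⟨hpU, q, hq, rfl⟩
      exact ⟨q, hU' ▸ ⟨hpU, hq⟩, rfl⟩
    · exact le_inf hmapU' (Submodule.map_mono hU'le)
  haveI : FiniteDimensional ℂ U := Submodule.finiteDimensional_of_le hU
  haveI : FiniteDimensional ℂ ((formSpace m d).map ι) :=
    Submodule.finiteDimensional_of_le (map_embed_le m n d hmn)
  have hsum := Submodule.finrank_sup_add_finrank_inf_eq U ((formSpace m d).map ι)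
  rw [hinf, finrank_map_embed, finrank_map_embed] at hsum
  have h1 : finrank ℂ U ≤ finrank ℂ (formSpace n d) := Submodule.finrank_mono hU
  have h2 : finrank ℂ U' ≤ finrank ℂ (formSpace m d) := Submodule.finrank_mono hU'le
  have hle : U ⊔ (formSpace m d).map ι ≤ formSpace n d :=
    sup_le hU (map_embed_le m n d hmn)
  have h3 : finrank ℂ ↥(U ⊔ (formSpace m d).map ι) ≤ finrank ℂ (formSpace n d) :=
    Submodule.finrank_mono hle
  apply Submodule.eq_of_le_of_finrank_le hle
  unfold vcodim at hcodim hcodim'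
  omega

end
end Aux8

namespace Aux8

lemma deg_add {N : ℕ} (a b : Fin N →₀ ℕ) : (a + b).degree = a.degree + b.degree := by
  simp [Finsupp.degree_eq_weight_one]

lemma deg_single {N : ℕ} (i : Fin N) (c : ℕ) : (Finsupp.single i c).degree = c := by
  rcases eq_or_ne c 0 with rfl | hc
  · simp [Finsupp.degree]
  · exact Finsupp.degree_single i c

def exDeg (m : ℕ) {N : ℕ} (s : Fin N →₀ ℕ) : ℕ := ∑ i : Fin N, if m ≤ i.val then s i else 0

lemma exDeg_add {m N : ℕ} (a b : Fin N →₀ ℕ) :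
    exDeg m (a + b) = exDeg m a + exDeg m b := by
  unfold exDeg
  rw [← Finset.sum_add_distrib]
  congr 1; ext i; split <;> simp

lemma exDeg_single {m N : ℕ} (i : Fin N) (c : ℕ) :
    exDeg m (Finsupp.single i c) = if m ≤ i.val then c else 0 := by
  unfold exDeg
  rw [Finset.sum_eq_single i]
  · simp
  · intro j _ hj
    have : Finsupp.single i c j = 0 := Finsupp.single_eq_of_ne' (fun h => hj h.symm)
    rw [this]
    simp
  · simp

lemma exDeg_eq_zero_iff {m N : ℕ} (s : Fin N →₀ ℕ) :
    exDeg m s = 0 ↔ ∀ i : Fin N, m ≤ i.val → s i = 0 := by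
  unfold exDeg
  rw [Finset.sum_eq_zero_iff]
  constructor
  · intro h i hi
    have := h i (Finset.mem_univ i)
    simpa [hi] using this
  · intro h i _
    split
    · exact h i ‹_›
    · rfl

lemma exists_extra {m N : ℕ} {s : Fin N →₀ ℕ} (h : 0 < exDeg m s) :
    ∃ i : Fin N, m ≤ i.val ∧ 0 < s i := by
  by_contra hc
  push_neg at hc
  rw [Nat.pos_iff_ne_zero, Ne, exDeg_eq_zero_iff] at h
  exact h fun i hi => Nat.le_zero.mp (hc i hi)

lemma split_deg {N : ℕ} (a : ℕ) : ∀ (b : ℕ) (t : Fin N →₀ ℕ), t.degree = a + b →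
    ∃ σ τ : Fin N →₀ ℕ, σ + τ = t ∧ σ.degree = a ∧ τ.degree = b := by
  induction a with
  | zero => exact fun b t h => ⟨0, t, by simp, map_zero _, by simpa using h⟩
  | succ a ih =>
    intro b t h
    have ht : t ≠ 0 := by
      rintro rfl
      rw [map_zero] at h
      omega
    obtain ⟨i, hi⟩ := DFunLike.ne_iff.mp ht
    simp only [Finsupp.coe_zero, Pi.zero_apply] at hi
    have hle : Finsupp.single i 1 ≤ t := Finsupp.single_le_iff.mpr (by omega)
    set t' := t - Finsupp.single i 1 with ht'
    have hsum : Finsupp.single i 1 + t' = t := add_tsub_cancel_of_le hle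
    have hdeg : t'.degree = a + b := by
      have := deg_add (Finsupp.single i 1) t'
      rw [hsum, deg_single] at this
      omega
    obtain ⟨σ, τ, h1, h2, h3⟩ := ih b t' hdeg
    exact ⟨Finsupp.single i 1 + σ, τ, by rw [add_assoc, h1, hsum],
      by rw [deg_add, deg_single, h2, Nat.add_comm], h3⟩

/-- extract one extra variable -/
lemma extract_extra {m N : ℕ} {s : Fin N →₀ ℕ} (h : 0 < exDeg m s) :
    ∃ (i : Fin N) (ν : Fin N →₀ ℕ), m ≤ i.val ∧ Finsupp.single i 1 + ν = s ∧
      ν.degree + 1 = s.degree ∧ exDeg m ν + 1 = exDeg m s := by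
  obtain ⟨i, hi, hpos⟩ := exists_extra h
  have hle : Finsupp.single i 1 ≤ s := Finsupp.single_le_iff.mpr hpos
  refine ⟨i, s - Finsupp.single i 1, hi, add_tsub_cancel_of_le hle, ?_, ?_⟩
  · have := deg_add (Finsupp.single i 1) (s - Finsupp.single i 1)
    rw [add_tsub_cancel_of_le hle, deg_single] at this
    omega
  · have := exDeg_add (m := m) (Finsupp.single i 1) (s - Finsupp.single i 1)
    rw [add_tsub_cancel_of_le hle, exDeg_single] at this
    simp only [hi, if_true] at this
    omega

end Aux8

namespace Aux8

lemma mem_of_support {n : ℕ} {p : PolyR n} {B : Submodule ℂ (PolyR n)}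
    (h : ∀ s ∈ p.support, (monomial s (1:ℂ)) ∈ B) : p ∈ B := by
  rw [← p.support_sum_monomial_coeff]
  refine B.sum_mem fun s hs => ?_
  have : (monomial s (coeff s p) : PolyR n) = (coeff s p) • monomial s 1 := by
    rw [smul_monomial, smul_eq_mul, mul_one]
  rw [this]
  exact B.smul_mem _ (h s hs)

lemma monomial_mem_fs {n d : ℕ} {s : Fin n →₀ ℕ} (h : s.degree = d) :
    (monomial s (1:ℂ)) ∈ formSpace n d :=
  isHomogeneous_monomial 1 h

lemma support_degree {n d : ℕ} {p : PolyR n} (hp : p ∈ formSpace n d)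
    {t : Fin n →₀ ℕ} (ht : t ∈ p.support) : t.degree = d := by
  rw [Finsupp.degree_eq_weight_one]
  exact hp (mem_support_iff.mp ht)

lemma degree_mapDomain {m n : ℕ} (h : m ≤ n) (t : Fin m →₀ ℕ) :
    (Finsupp.mapDomain (Fin.castLE h) t).degree = t.degree := by
  simp only [Finsupp.degree_eq_weight_one]
  rw [Finsupp.weight_apply, Finsupp.weight_apply, Finsupp.sum_mapDomain_index] <;> simp

lemma embed_monomial {m n : ℕ} (h : m ≤ n) (t : Fin m →₀ ℕ) :
    (embed m n h).toLinearMap (monomial t (1:ℂ)) =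
      monomial (Finsupp.mapDomain (Fin.castLE h) t) 1 := by
  show (embed m n h) (monomial t 1) = _
  rw [embed, rename_monomial]

lemma exDeg_mapDomain {m n : ℕ} (h : m ≤ n) (t : Fin m →₀ ℕ) :
    exDeg m (Finsupp.mapDomain (Fin.castLE h) t) = 0 := by
  rw [exDeg_eq_zero_iff]
  intro i hi
  rw [← Finsupp.notMem_support_iff]
  intro hmem
  have := Finsupp.mapDomain_support hmem
  simp only [Finset.mem_image] at this
  obtain ⟨j, _, rfl⟩ := this
  simp only [Fin.coe_castLE] at hi
  omega

lemma exDeg_zero_exists {m n : ℕ} (h : m ≤ n) {s : Fin n →₀ ℕ} (hs : exDeg m s = 0) :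
    ∃ t : Fin m →₀ ℕ, Finsupp.mapDomain (Fin.castLE h) t = s ∧ t.degree = s.degree := by
  have hsupp : ↑s.support ⊆ Set.range (Fin.castLE h) := by
    intro i hi
    rw [exDeg_eq_zero_iff] at hs
    have : ¬ m ≤ i.val := by
      intro hle
      exact Finsupp.mem_support_iff.mp hi (hs i hle)
    exact ⟨⟨i.val, by omega⟩, rfl⟩
  refine ⟨Finsupp.comapDomain _ s ((Fin.castLE_injective h).injOn), ?_, ?_⟩
  · exact Finsupp.mapDomain_comapDomain _ (Fin.castLE_injective h) _ hsupp
  · rw [← degree_mapDomain h, Finsupp.mapDomain_comapDomain _ (Fin.castLE_injective h) s hsupp]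

/-- monomials in the support of `ι p` have `exDeg = 0`. -/
lemma exDeg_support_embed {m n : ℕ} (h : m ≤ n) (p : PolyR m)
    {t : Fin n →₀ ℕ} (ht : t ∈ ((embed m n h).toLinearMap p).support) : exDeg m t = 0 := by
  classical
  have : ((embed m n h).toLinearMap p).support = p.support.image (Finsupp.mapDomain (Fin.castLE h)) := by
    show (rename (Fin.castLE h) p).support = _
    exact support_rename_of_injective (Fin.castLE_injective h)
  rw [this, Finset.mem_image] at ht
  obtain ⟨u, _, rfl⟩ := ht
  exact exDeg_mapDomain h u

end Aux8

namespace Aux8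

section
variable {n m d : ℕ} (hd : 2 ≤ d) (hmn : m ≤ n)
  {U B : Submodule ℂ (PolyR n)}
  (hkey : U ⊔ (formSpace m d).map (embed m n hmn).toLinearMap = formSpace n d)
  (hUU : U * U ≤ B)
  (h2d : (formSpace m (2*d)).map (embed m n hmn).toLinearMap ≤ B)
  (h2d1 : ∀ i : Fin n, m ≤ i.val →
    Submodule.span ℂ {(X i : PolyR n)} * (formSpace m (2*d-1)).map (embed m n hmn).toLinearMap ≤ B)

include hd hmn h2d h2d1

lemma low_mem {s : Fin n →₀ ℕ} (hs : s.degree = 2*d) (hex : exDeg m s ≤ 1) :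
    (monomial s (1:ℂ)) ∈ B := by
  interval_cases hex1 : exDeg m s
  · obtain ⟨t, ht, htd⟩ := exDeg_zero_exists hmn hex1
    have : (monomial s (1:ℂ)) = (embed m n hmn).toLinearMap (monomial t 1) := by
      rw [embed_monomial, ht]
    rw [this]
    exact h2d (Submodule.mem_map_of_mem (monomial_mem_fs (by omega)))
  · obtain ⟨i, ν, hi, hsum, hdeg, hexv⟩ := extract_extra (m := m) (s := s) (by omega)
    have hexν : exDeg m ν = 0 := by omega
    obtain ⟨t, ht, htd⟩ := exDeg_zero_exists hmn hexν
    have hmono : (monomial s (1:ℂ)) = X i * (embed m n hmn).toLinearMap (monomial t 1) := by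
      rw [embed_monomial, ht, X, monomial_mul, one_mul, hsum]
    rw [hmono]
    exact h2d1 i hi (Submodule.mul_mem_mul (Submodule.mem_span_singleton_self _)
      (Submodule.mem_map_of_mem (monomial_mem_fs (by omega))))

include hkey hUU

lemma main_mem (e : ℕ) : ∀ s : Fin n →₀ ℕ, s.degree = 2*d → exDeg m s ≤ e →
    (monomial s (1:ℂ)) ∈ B := by
  induction e with
  | zero => exact fun s hs he => low_mem hd hmn h2d h2d1 hs (by omega)
  | succ e IH =>
    intro s hs he
    by_cases hex : exDeg m s ≤ 1
    · exact low_mem hd hmn h2d h2d1 hs hex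
    push_neg at hex
    obtain ⟨i, s₁, hi, hsum₁, hdeg₁, hex₁⟩ := extract_extra (m := m) (s := s) (by omega)
    obtain ⟨j, ν, hj, hsum₂, hdeg₂, hex₂⟩ := extract_extra (m := m) (s := s₁) (by omega)
    obtain ⟨σ, τ, hστ, hσd, hτd⟩ := split_deg (d-1) (d-1) ν (by omega)
    set sa := Finsupp.single i 1 + σ with hsa
    set sb := Finsupp.single j 1 + τ with hsb
    have hsad : sa.degree = d := by rw [hsa, deg_add, deg_single, hσd]; omega
    have hsbd : sb.degree = d := by rw [hsb, deg_add, deg_single, hτd]; omega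
    have hFa : (monomial sa (1:ℂ)) ∈ U ⊔ (formSpace m d).map (embed m n hmn).toLinearMap :=
      hkey ▸ monomial_mem_fs hsad
    have hFb : (monomial sb (1:ℂ)) ∈ U ⊔ (formSpace m d).map (embed m n hmn).toLinearMap :=
      hkey ▸ monomial_mem_fs hsbd
    obtain ⟨u₁, hu₁, w₁, hw₁, hF₁⟩ := Submodule.mem_sup.mp hFa
    obtain ⟨u₂, hu₂, w₂, hw₂, hF₂⟩ := Submodule.mem_sup.mp hFb
    have hs' : sa + sb = s := by
      ext a
      have e1 := DFunLike.congr_fun hsum₁ a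
      have e2 := DFunLike.congr_fun hsum₂ a
      have e3 := DFunLike.congr_fun hστ a
      simp only [hsa, hsb, Finsupp.add_apply] at e1 e2 e3 ⊢
      omega
    have hprod : (monomial s (1:ℂ)) = monomial sa 1 * monomial sb 1 := by
      rw [monomial_mul, one_mul, hs']
    have hid : (monomial s (1:ℂ)) =
        u₁*u₂ + (monomial sa 1) * w₂ + (monomial sb 1) * w₁ - w₁*w₂ := by
      rw [hprod, ← hF₁, ← hF₂]; ring
    -- bound for exDeg of σ/τ
    have hexσ : exDeg m ν = exDeg m σ + exDeg m τ := by rw [← hστ, exDeg_add]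
    have hexi : exDeg m (Finsupp.single i 1) = 1 := by rw [exDeg_single, if_pos hi]
    have hexj : exDeg m (Finsupp.single j 1) = 1 := by rw [exDeg_single, if_pos hj]
    -- cross terms
    have hcross : ∀ (sc : Fin n →₀ ℕ) (w : PolyR n),
        sc.degree = d → exDeg m sc ≤ e →
        w ∈ (formSpace m d).map (embed m n hmn).toLinearMap →
        (monomial sc 1) * w ∈ B := by
      intro sc w hscd hsce hw
      apply mem_of_support
      intro t ht
      classical
      have hsupp := support_mul (monomial sc (1:ℂ)) w ht
      rw [Finset.mem_add] at hsupp
      obtain ⟨t₁, ht₁, t₂, ht₂, rfl⟩ := hsupp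
      rw [support_monomial] at ht₁
      simp only [one_ne_zero, if_false, Finset.mem_singleton] at ht₁
      subst ht₁
      obtain ⟨p, hp, rfl⟩ := hw
      have ht₂d : t₂.degree = d := support_degree (map_embed_le m n d hmn
        (Submodule.mem_map_of_mem hp)) ht₂
      have ht₂e : exDeg m t₂ = 0 := exDeg_support_embed hmn p ht₂
      apply IH
      · rw [deg_add]; omega
      · rw [exDeg_add]; omega
    have hexsa : exDeg m sa ≤ e := by
      rw [hsa, exDeg_add, hexi]
      have h1 : exDeg m s = exDeg m σ + exDeg m τ + 2 := by omega
      omega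
    have hexsb : exDeg m sb ≤ e := by
      rw [hsb, exDeg_add, hexj]
      have h1 : exDeg m s = exDeg m σ + exDeg m τ + 2 := by omega
      omega
    rw [hid]
    refine B.sub_mem (B.add_mem (B.add_mem (hUU (Submodule.mul_mem_mul hu₁ hu₂))
      (hcross sa w₂ hsad hexsa hw₂)) (hcross sb w₁ hsbd hexsb hw₁)) ?_
    -- w₁ * w₂ ∈ B
    obtain ⟨p₁, hp₁, rfl⟩ := hw₁
    obtain ⟨p₂, hp₂, rfl⟩ := hw₂
    have : (embed m n hmn).toLinearMap p₁ * (embed m n hmn).toLinearMap p₂ =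
        (embed m n hmn).toLinearMap (p₁ * p₂) := by
      show (embed m n hmn) p₁ * (embed m n hmn) p₂ = (embed m n hmn) (p₁ * p₂)
      rw [map_mul]
    rw [this]
    apply h2d
    apply Submodule.mem_map_of_mem
    have : p₁ * p₂ ∈ formSpace m d * formSpace m d := Submodule.mul_mem_mul hp₁ hp₂
    exact mul_le_fs (by omega) le_rfl le_rfl this

end
end Aux8

namespace Aux8

lemma finrank_finset_sup_le {κ : Type*} [DecidableEq κ] {V : Type*} [AddCommGroup V] [Module ℂ V]
    (f : κ → Submodule ℂ V) (Q : Submodule ℂ V) [FiniteDimensional ℂ Q]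
    (hf : ∀ i, f i ≤ Q) (s : Finset κ) :
    finrank ℂ ↥(s.sup f) ≤ ∑ i ∈ s, finrank ℂ (f i) := by
  classical
  induction s using Finset.induction with
  | empty => rw [Finset.sup_empty, finrank_bot]; simp
  | insert a s ha ih =>
    rw [Finset.sup_insert, Finset.sum_insert ha]
    haveI : FiniteDimensional ℂ (f a) := Submodule.finiteDimensional_of_le (hf a)
    haveI : FiniteDimensional ℂ ↥(s.sup f) :=
      Submodule.finiteDimensional_of_le (Finset.sup_le fun i _ => hf i)
    exact le_trans (Submodule.finrank_add_le_finrank_add_finrank _ _)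
      (Nat.add_le_add le_rfl ih)

lemma finrank_iSup_le {κ : Type*} [Fintype κ] [DecidableEq κ] {V : Type*} [AddCommGroup V]
    [Module ℂ V] (f : κ → Submodule ℂ V) (Q : Submodule ℂ V) [FiniteDimensional ℂ Q]
    (hf : ∀ i, f i ≤ Q) :
    finrank ℂ ↥(⨆ i, f i) ≤ ∑ i, finrank ℂ (f i) := by
  rw [← Finset.sup_univ_eq_iSup]
  exact finrank_finset_sup_le f Q hf _

lemma card_extra {n m : ℕ} (h : m ≤ n) :
    Fintype.card {i : Fin n // m ≤ i.val} = n - m := by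
  have e : {i : Fin n // m ≤ i.val} ≃ Fin (n - m) :=
    { toFun := fun i => ⟨i.1.val - m, by have := i.1.isLt; have := i.2; omega⟩
      invFun := fun j => ⟨⟨j.val + m, by have := j.isLt; omega⟩, by simp⟩
      left_inv := fun i => by
        ext
        have := i.2
        simp only []
        omega
      right_inv := fun j => by
        ext
        simp only []
        omega }
  rw [Fintype.card_congr e, Fintype.card_fin]

lemma span_mul_eq_map {V : Type*} [CommRing V] [Algebra ℂ V] (x : V) (M : Submodule ℂ V) :
    Submodule.span ℂ {x} * M = M.map (LinearMap.mulLeft ℂ x) := by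
  ext z
  rw [Submodule.mem_span_singleton_mul]
  constructor
  · rintro ⟨y, hy, rfl⟩; exact ⟨y, hy, rfl⟩
  · rintro ⟨y, hy, rfl⟩; exact ⟨y, hy, rfl⟩

lemma finrank_span_mul_le {V : Type*} [CommRing V] [Algebra ℂ V] (x : V) (M : Submodule ℂ V)
    [Module.Finite ℂ M] :
    finrank ℂ ↥(Submodule.span ℂ {x} * M) ≤ finrank ℂ M := by
  rw [span_mul_eq_map]
  exact Submodule.finrank_map_le _ _

end Aux8

theorem stmt8 (n m d k : ℕ) (hd : 2 ≤ d) (hm : 2 ≤ m) (hmn : m ≤ n)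
    (U : Submodule ℂ (PolyR n)) (hU : U ≤ formSpace n d)
    (hcodim : vcodim n d U = k)
    (U' : Submodule ℂ (PolyR m))
    (hU' : U' = Submodule.comap (embed m n hmn).toLinearMap U ⊓ formSpace m d)
    (hcodim' : vcodim m d U' = k) :
    vcodim n (2 * d) (U * U) ≤
      (n - m) * vcodim m (2 * d - 1) (U' * formSpace m (d - 1)) +
        vcodim m (2 * d) (U' * U') := by
  classical
  set ι := (embed m n hmn).toLinearMap with hι
  have hU'le : U' ≤ formSpace m d := hU' ▸ inf_le_right
  have hmapU' : U'.map ι ≤ U := by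
    rw [Submodule.map_le_iff_le_comap, hU']; exact inf_le_left
  have hkey := Aux8.sup_key hmn U hU hcodim U' hU' hcodim'
  -- complements
  have hP₁ : U' * formSpace m (d-1) ≤ formSpace m (2*d-1) :=
    Aux8.mul_le_fs (by omega) hU'le le_rfl
  have hP₂ : U' * U' ≤ formSpace m (2*d) :=
    Aux8.mul_le_fs (by omega) hU'le hU'le
  obtain ⟨T₁, hT₁le, hT₁sup, hT₁rank⟩ := Aux8.exists_compl _ _ hP₁
  obtain ⟨T₂, hT₂le, hT₂sup, hT₂rank⟩ := Aux8.exists_compl _ _ hP₂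
  set c₁ := vcodim m (2*d-1) (U' * formSpace m (d-1)) with hc₁
  set c₂ := vcodim m (2*d) (U' * U') with hc₂
  set G := ⨆ i : {i : Fin n // m ≤ i.val},
    Submodule.span ℂ {(X i.1 : PolyR n)} * T₁.map ι with hG
  set F := (U*U) ⊔ T₂.map ι ⊔ G with hF
  have hUUF : U * U ≤ F := le_trans le_sup_left le_sup_left
  -- reduction claims
  have h2dF : (formSpace m (2*d)).map ι ≤ F := by
    rw [← hT₂sup, Submodule.map_sup]
    apply sup_le
    · refine le_trans ?_ (le_trans (le_sup_left : U*U ≤ U*U ⊔ T₂.map ι) le_sup_left)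
      rw [hι, Submodule.map_mul]
      exact mul_le_mul' hmapU' hmapU'
    · exact le_trans (le_sup_right : T₂.map ι ≤ U*U ⊔ T₂.map ι) le_sup_left
  have h2d1F : ∀ i : Fin n, m ≤ i.val →
      Submodule.span ℂ {(X i : PolyR n)} * (formSpace m (2*d-1)).map ι ≤ F := by
    intro i hi
    rw [← hT₁sup, Submodule.map_sup, Submodule.mul_sup]
    apply sup_le
    · -- span{Xi} * map (U' * fs m (d-1)) ≤ F
      rw [hι, Submodule.map_mul]
      have hinner : Submodule.span ℂ {(X i : PolyR n)} * (formSpace m (d-1)).map ι ≤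
          formSpace n d := by
        apply Aux8.mul_le_fs (show 1 + (d-1) = d by omega)
        · rw [Submodule.span_le, Set.singleton_subset_iff]
          exact isHomogeneous_X ℂ i
        · exact Aux8.map_embed_le m n (d-1) hmn
      calc Submodule.span ℂ {(X i : PolyR n)} * (U'.map ι * (formSpace m (d-1)).map ι)
          = U'.map ι * (Submodule.span ℂ {(X i : PolyR n)} * (formSpace m (d-1)).map ι) := by
            ring
        _ ≤ U'.map ι * formSpace n d := mul_le_mul' le_rfl hinner
        _ = U'.map ι * (U ⊔ (formSpace m d).map ι) := by rw [hkey]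
        _ = U'.map ι * U ⊔ U'.map ι * (formSpace m d).map ι := Submodule.mul_sup _ _ _
        _ ≤ F := by
            apply sup_le
            · exact le_trans (mul_le_mul' hmapU' le_rfl) hUUF
            · rw [hι, ← Submodule.map_mul]
              refine le_trans (Submodule.map_mono ?_) h2dF
              exact Aux8.mul_le_fs (by omega) hU'le le_rfl
    · refine le_trans ?_ (le_sup_right : G ≤ F)
      rw [hG]
      exact le_iSup (fun j : {i : Fin n // m ≤ i.val} =>
        Submodule.span ℂ {(X j.1 : PolyR n)} * T₁.map ι) ⟨i, hi⟩
  -- main span result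
  have hmain : formSpace n (2*d) ≤ F := by
    intro p hp
    apply Aux8.mem_of_support
    intro s hs
    exact Aux8.main_mem hd hmn hkey hUUF h2dF h2d1F (Aux8.exDeg m s) s
      (Aux8.support_degree hp hs) le_rfl
  -- dimension count
  have hUU2d : U * U ≤ formSpace n (2*d) := Aux8.mul_le_fs (by omega) hU hU
  have hT₂2d : T₂.map ι ≤ formSpace n (2*d) :=
    le_trans (Submodule.map_mono hT₂le) (Aux8.map_embed_le m n (2*d) hmn)
  have hXT₁ : ∀ j : {i : Fin n // m ≤ i.val},
      Submodule.span ℂ {(X j.1 : PolyR n)} * T₁.map ι ≤ formSpace n (2*d) := by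
    intro j
    apply Aux8.mul_le_fs (show 1 + (2*d-1) = 2*d by omega)
    · rw [Submodule.span_le, Set.singleton_subset_iff]
      exact isHomogeneous_X ℂ j.1
    · exact le_trans (Submodule.map_mono hT₁le) (Aux8.map_embed_le m n (2*d-1) hmn)
  have hG2d : G ≤ formSpace n (2*d) := by rw [hG]; exact iSup_le hXT₁
  haveI : FiniteDimensional ℂ (U * U : Submodule ℂ (PolyR n)) :=
    Submodule.finiteDimensional_of_le hUU2d
  haveI : FiniteDimensional ℂ (T₂.map ι) := Submodule.finiteDimensional_of_le hT₂2d
  haveI : FiniteDimensional ℂ G := Submodule.finiteDimensional_of_le hG2d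
  haveI : FiniteDimensional ℂ ↥(U*U ⊔ T₂.map ι) :=
    Submodule.finiteDimensional_of_le (sup_le hUU2d hT₂2d)
  haveI : FiniteDimensional ℂ T₁ := Submodule.finiteDimensional_of_le hT₁le
  -- rank bounds
  have hrG : finrank ℂ G ≤ (n - m) * c₁ := by
    have h1 : finrank ℂ G ≤ ∑ j : {i : Fin n // m ≤ i.val},
        finrank ℂ ↥(Submodule.span ℂ {(X j.1 : PolyR n)} * T₁.map ι) := by
      rw [hG]
      exact Aux8.finrank_iSup_le _ (formSpace n (2*d)) hXT₁
    have h2 : ∀ j : {i : Fin n // m ≤ i.val},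
        finrank ℂ ↥(Submodule.span ℂ {(X j.1 : PolyR n)} * T₁.map ι) ≤ c₁ := by
      intro j
      haveI : Module.Finite ℂ (T₁.map ι) :=
        Submodule.finiteDimensional_of_le
          (le_trans (Submodule.map_mono hT₁le) (Aux8.map_embed_le m n (2*d-1) hmn))
      refine le_trans (Aux8.finrank_span_mul_le _ _) ?_
      rw [Aux8.finrank_map_embed m n hmn T₁, hT₁rank]
      exact le_of_eq rfl
    calc finrank ℂ G ≤ _ := h1
      _ ≤ ∑ _j : {i : Fin n // m ≤ i.val}, c₁ := Finset.sum_le_sum (fun j _ => h2 j)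
      _ = (n - m) * c₁ := by
          rw [Finset.sum_const, Finset.card_univ, Aux8.card_extra hmn, smul_eq_mul]
  have hrT₂ : finrank ℂ (T₂.map ι) ≤ c₂ := by
    rw [Aux8.finrank_map_embed m n hmn T₂, hT₂rank]
    exact le_of_eq rfl
  have hFr : finrank ℂ (formSpace n (2*d)) ≤
      finrank ℂ (U*U : Submodule ℂ (PolyR n)) + c₂ + (n-m)*c₁ := by
    have hFle : F ≤ formSpace n (2*d) := by
      rw [hF]; exact sup_le (sup_le hUU2d hT₂2d) hG2d
    haveI : FiniteDimensional ℂ F := Submodule.finiteDimensional_of_le hFle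
    have e1 : finrank ℂ (formSpace n (2*d)) ≤ finrank ℂ F := Submodule.finrank_mono hmain
    have e2 : finrank ℂ F ≤ finrank ℂ ↥(U*U ⊔ T₂.map ι) + finrank ℂ G := by
      rw [hF]
      exact Submodule.finrank_add_le_finrank_add_finrank _ _
    have e3 : finrank ℂ ↥(U*U ⊔ T₂.map ι) ≤
        finrank ℂ (U*U : Submodule ℂ (PolyR n)) + finrank ℂ (T₂.map ι) :=
      Submodule.finrank_add_le_finrank_add_finrank _ _
    omega
  show vcodim n (2*d) (U*U) ≤ (n-m) * c₁ + c₂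
  unfold vcodim
  omega
end
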